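/- arXiv:1004.1958 — 3 statements merged into one kernel-verified Lean document; each statement's English description precedes it below -/
import Mathlib

section
/- There exists a constant C > 0 such that for all x, y ∈ ℤ, the expected number of visits of the walk to y strictly before hitting 0 satisfies 𝔼_x(#{n : n < H_0^Y and Y_n = y}) ≤ C·|y|. -/
open MeasureTheory
open scoped Classical ENNReal

/-- A probability mass function on `ℤ`, encoded as a nonnegative real-valued
function summing to `1`. -/
def IsPMF (p : ℤ → ℝ) : Prop := (∀ x, 0 ≤ p x) ∧ HasSum p 1

/-- The hitting time of a set `A ⊆ ℤ` by a trajectory `ω : ℕ → ℤ`, with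
value `⊤` if the set is never visited. -/
noncomputable def hitTime (A : Set ℤ) (ω : ℕ → ℤ) : ℕ∞ :=
  ⨅ (n : ℕ) (_ : ω n ∈ A), (n : ℕ∞)

namespace RWProof


noncomputable def pk (π : ℤ → ℝ) (x z : ℤ) : ℝ≥0∞ := ENNReal.ofReal (π (z - x))

/-- weight of `n`-step paths from `x` to `y` avoiding `A` at all times `0..n`. -/
noncomputable def qk (π : ℤ → ℝ) (A : Set ℤ) (y : ℤ) : ℕ → ℤ → ℝ≥0∞
  | 0 => fun x => if x ∉ A ∧ x = y then 1 else 0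
  | n+1 => fun x => if x ∉ A then ∑' w, pk π x w * qk π A y n w else 0

/-- weight of `n`-step paths from `x` avoiding `A`, hitting `y` first at time `n`. -/
noncomputable def fp (π : ℤ → ℝ) (A : Set ℤ) (y : ℤ) : ℕ → ℤ → ℝ≥0∞
  | 0 => fun x => if x ∉ A ∧ x = y then 1 else 0
  | n+1 => fun x => if x ∉ A ∧ x ≠ y then ∑' w, pk π x w * fp π A y n w else 0

noncomputable def hfun (π : ℤ → ℝ) (A : Set ℤ) (y : ℤ) (x : ℤ) : ℝ≥0∞ := ∑' n, fp π A y n x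

noncomputable def rho (π : ℤ → ℝ) (A : Set ℤ) (y : ℤ) (m : ℕ) : ℝ≥0∞ :=
  ∑' w, pk π y w * fp π A y m w

noncomputable def rr (π : ℤ → ℝ) (A : Set ℤ) (y : ℤ) : ℝ≥0∞ := ∑' m, rho π A y m

variable {π : ℤ → ℝ} {A : Set ℤ} {y : ℤ}

lemma tsum_pk (hπ : IsPMF π) (x : ℤ) : ∑' z, pk π x z = 1 := by
  have h1 : ∑' z : ℤ, ENNReal.ofReal (π z) = 1 := by
    rw [← ENNReal.ofReal_tsum_of_nonneg hπ.1 hπ.2.summable, hπ.2.tsum_eq, ENNReal.ofReal_one]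
  calc ∑' z, pk π x z = ∑' z : ℤ, ENNReal.ofReal (π z) := by
        refine ((Equiv.addRight x).tsum_eq (fun z => ENNReal.ofReal (π (z - x)))).symm.trans ?_
        simp [pk]
    _ = 1 := h1

lemma fp_mem (hx : x ∈ A) : ∀ n, fp π A y n x = 0 := by
  intro n; cases n <;> simp [fp, hx]

lemma qk_mem (hx : x ∈ A) : ∀ n, qk π A y n x = 0 := by
  intro n; cases n <;> simp [qk, hx]

lemma qk_target_mem (hy : y ∈ A) : ∀ n x, qk π A y n x = 0 := by
  intro n
  induction n with
  | zero =>
    intro x; simp only [qk]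
    split
    · next h => exact absurd (h.2 ▸ hy) h.1
    · rfl
  | succ n ih => intro x; simp [qk, ih]

lemma fp_partial_le_one (hπ : IsPMF π) : ∀ N x, ∑ n ∈ Finset.range N, fp π A y n x ≤ 1 := by
  intro N
  induction N with
  | zero => intro x; simp
  | succ N ih =>
    intro x
    rw [Finset.sum_range_succ']
    by_cases hx : x ∉ A ∧ x ≠ y
    · have h0 : fp π A y 0 x = 0 := by simp [fp, hx.2]
      rw [h0, add_zero]
      have : ∀ n, fp π A y (n+1) x = ∑' w, pk π x w * fp π A y n w := by
        intro n; simp [fp, hx]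
      calc ∑ n ∈ Finset.range N, fp π A y (n+1) x
          = ∑ n ∈ Finset.range N, ∑' w, pk π x w * fp π A y n w := by
            exact Finset.sum_congr rfl fun n _ => this n
        _ = ∑' w, ∑ n ∈ Finset.range N, pk π x w * fp π A y n w := by
            exact (Summable.tsum_finsetSum (fun n _ => ENNReal.summable)).symm
        _ = ∑' w, pk π x w * ∑ n ∈ Finset.range N, fp π A y n w := by
            exact tsum_congr fun w => (Finset.mul_sum _ _ _).symm
        _ ≤ ∑' w, pk π x w * 1 := by
            exact ENNReal.tsum_le_tsum fun w => mul_le_mul_right (ih w) _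
        _ = 1 := by simpa using tsum_pk hπ x
    · have h1 : ∀ n, fp π A y (n+1) x = 0 := by intro n; simp [fp]; tauto
      have h2 : fp π A y 0 x ≤ 1 := by simp [fp]; split <;> simp
      simpa [h1] using h2

lemma hfun_le_one (hπ : IsPMF π) (x : ℤ) : hfun π A y x ≤ 1 :=
  Summable.tsum_le_of_sum_range_le ENNReal.summable (fun N => fp_partial_le_one hπ N x)

lemma hfun_mem (hx : x ∈ A) : hfun π A y x = 0 := by
  simp [hfun, fp_mem hx]

lemma hfun_self (hy : y ∉ A) : hfun π A y y = 1 := by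
  have : ∀ n, fp π A y n y = if n = 0 then 1 else 0 := by
    intro n; cases n <;> simp [fp, hy]
  rw [hfun]; simp [this]

lemma hfun_harmonic (hx : x ∉ A) (hxy : x ≠ y) :
    hfun π A y x = ∑' z, pk π x z * hfun π A y z := by
  have h0 : fp π A y 0 x = 0 := by simp [fp, hxy]
  have hs : ∀ n, fp π A y (n+1) x = ∑' w, pk π x w * fp π A y n w := by
    intro n; simp [fp, hx, hxy]
  calc hfun π A y x = ∑' n, fp π A y (n+1) x := by
        refine (Nat.succ_injective.tsum_eq ?_).symm
        intro n hn
        cases n with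
        | zero => exact absurd h0 (Function.mem_support.mp hn)
        | succ k => exact ⟨k, rfl⟩
    _ = ∑' n, ∑' w, pk π x w * fp π A y n w := tsum_congr hs
    _ = ∑' w, ∑' n, pk π x w * fp π A y n w := ENNReal.tsum_comm
    _ = ∑' w, pk π x w * hfun π A y w := tsum_congr fun w => ENNReal.tsum_mul_left


/-- first-passage decomposition. -/
lemma identity1 : ∀ n x, qk π A y n x =
    ∑ m ∈ Finset.range (n+1), fp π A y m x * qk π A y (n - m) y := by
  intro n
  induction n with
  | zero =>
    intro x
    simp only [zero_add, Finset.range_one, Finset.sum_singleton, Nat.sub_zero]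
    by_cases hx : x ∉ A ∧ x = y
    · rcases hx with ⟨h1, rfl⟩; simp [qk, fp, h1]
    · have h1 : qk π A y 0 x = 0 := by simp only [qk]; rw [if_neg hx]
      have h2 : fp π A y 0 x = 0 := by simp only [fp]; rw [if_neg hx]
      simp [h1, h2]
  | succ n ih =>
    intro x
    by_cases hxA : x ∈ A
    · rw [qk_mem hxA]
      simp [fp_mem hxA]
    · by_cases hxy : x = y
      · subst hxy
        rw [Finset.sum_range_succ']
        have hf : ∀ m, fp π A x (m+1) x = 0 := by intro m; simp [fp]
        have hf0 : fp π A x 0 x = 1 := by simp [fp, hxA]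
        simp [hf, hf0]
      · have hq : qk π A y (n+1) x = ∑' w, pk π x w * qk π A y n w := by simp [qk, hxA]
        have hfs : ∀ m, fp π A y (m+1) x = ∑' w, pk π x w * fp π A y m w := by
          intro m; simp [fp, hxA, hxy]
        rw [hq]
        calc ∑' w, pk π x w * qk π A y n w
            = ∑' w, pk π x w * ∑ m ∈ Finset.range (n+1), fp π A y m w * qk π A y (n - m) y := by
              exact tsum_congr fun w => by rw [ih w]
          _ = ∑' w, ∑ m ∈ Finset.range (n+1), pk π x w * (fp π A y m w * qk π A y (n - m) y) := by
              exact tsum_congr fun w => Finset.mul_sum _ _ _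
          _ = ∑ m ∈ Finset.range (n+1), ∑' w, pk π x w * (fp π A y m w * qk π A y (n - m) y) := by
              exact Summable.tsum_finsetSum fun m _ => ENNReal.summable
          _ = ∑ m ∈ Finset.range (n+1), (∑' w, pk π x w * fp π A y m w) * qk π A y (n - m) y := by
              refine Finset.sum_congr rfl fun m _ => ?_
              rw [← ENNReal.tsum_mul_right]; exact tsum_congr fun w => (mul_assoc _ _ _).symm
          _ = ∑ m ∈ Finset.range (n+1), fp π A y (m+1) x * qk π A y (n - m) y := by
              refine Finset.sum_congr rfl fun m _ => by rw [← hfs m]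
          _ = ∑ m ∈ Finset.range (n+1+1), fp π A y m x * qk π A y (n+1 - m) y := by
              rw [Finset.sum_range_succ' (fun m => fp π A y m x * qk π A y (n+1 - m) y) (n+1)]
              have h00 : fp π A y 0 x = 0 := by simp only [fp]; rw [if_neg]; tauto
              simp [h00]

/-- renewal equation for loops. -/
lemma renewal (hy : y ∉ A) (n : ℕ) :
    qk π A y (n+1) y = ∑ m ∈ Finset.range (n+1), rho π A y m * qk π A y (n - m) y := by
  have hq : qk π A y (n+1) y = ∑' w, pk π y w * qk π A y n w := by simp [qk, hy]
  rw [hq]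
  calc ∑' w, pk π y w * qk π A y n w
      = ∑' w, ∑ m ∈ Finset.range (n+1), pk π y w * (fp π A y m w * qk π A y (n - m) y) := by
        exact tsum_congr fun w => by rw [identity1 n w]; exact Finset.mul_sum _ _ _
    _ = ∑ m ∈ Finset.range (n+1), ∑' w, pk π y w * (fp π A y m w * qk π A y (n - m) y) := by
        exact Summable.tsum_finsetSum fun m _ => ENNReal.summable
    _ = ∑ m ∈ Finset.range (n+1), rho π A y m * qk π A y (n - m) y := by
        refine Finset.sum_congr rfl fun m _ => ?_
        rw [rho, ← ENNReal.tsum_mul_right]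
        exact tsum_congr fun w => (mul_assoc _ _ _).symm

/-- triangle sum dominated by square sum, for nonneg (ENNReal) entries. -/
lemma tri_le_square (u : ℕ → ℕ → ℝ≥0∞) (N : ℕ) :
    ∑ n ∈ Finset.range N, ∑ m ∈ Finset.range (n+1), u m (n - m)
      ≤ (∑ m ∈ Finset.range N, ∑ j ∈ Finset.range N, u m j) := by
  rw [← Finset.sum_sigma (Finset.range N) (fun n => Finset.range (n+1))
        (fun p => u p.2 (p.1 - p.2))]
  rw [← Finset.sum_product' (s := Finset.range N) (t := Finset.range N) (f := fun m j => u m j)]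
  have himg : ((Finset.range N).sigma (fun n => Finset.range (n+1))).image
      (fun p : Σ _ : ℕ, ℕ => (p.2, p.1 - p.2)) ⊆ Finset.range N ×ˢ Finset.range N := by
    intro q hq
    simp only [Finset.mem_image, Finset.mem_sigma, Finset.mem_range] at hq
    rcases hq with ⟨⟨n, m⟩, ⟨hn, hm⟩, rfl⟩
    simp only [Finset.mem_product, Finset.mem_range]
    exact ⟨lt_of_le_of_lt (Nat.lt_succ_iff.mp hm) hn, lt_of_le_of_lt (Nat.sub_le _ _) hn⟩
  have hinj : Set.InjOn (fun p : Σ _ : ℕ, ℕ => (p.2, p.1 - p.2))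
      ((Finset.range N).sigma (fun n => Finset.range (n+1))) := by
    rintro ⟨n, m⟩ h1 ⟨n', m'⟩ h2 heq
    simp only [Finset.coe_sigma, Set.mem_sigma_iff, Finset.mem_coe, Finset.mem_range] at h1 h2
    simp only [Prod.mk.injEq] at heq
    obtain ⟨rfl, h⟩ := heq
    have hm : m ≤ n := Nat.lt_succ_iff.mp h1.2
    have hm' : m ≤ n' := Nat.lt_succ_iff.mp h2.2
    have : n = n' := by omega
    subst this; rfl
  calc ∑ p ∈ (Finset.range N).sigma (fun n => Finset.range (n+1)), u p.2 (p.1 - p.2)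
      = ∑ q ∈ ((Finset.range N).sigma (fun n => Finset.range (n+1))).image
          (fun p : Σ _ : ℕ, ℕ => (p.2, p.1 - p.2)), u q.1 q.2 := by
        rw [Finset.sum_image (fun p hp q hq h => hinj hp hq h)]
    _ ≤ ∑ q ∈ Finset.range N ×ˢ Finset.range N, u q.1 q.2 :=
        Finset.sum_le_sum_of_subset himg

/-- partial sums of loop weights are bounded by `B`. -/
lemma loop_partial_le (hy : y ∉ A) {c : ℝ≥0∞} (hc0 : c ≠ 0) (hctop : c ≠ ⊤)
    (hrc : rr π A y + c ≤ 1) :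
    ∀ N, ∑ n ∈ Finset.range N, qk π A y n y ≤ c⁻¹ := by
  intro N
  induction N with
  | zero => simp
  | succ N ih =>
    rw [Finset.sum_range_succ']
    have h0 : qk π A y 0 y = 1 := by simp [qk, hy]
    have hstep : ∑ n ∈ Finset.range N, qk π A y (n+1) y
        ≤ rr π A y * c⁻¹ := by
      calc ∑ n ∈ Finset.range N, qk π A y (n+1) y
          = ∑ n ∈ Finset.range N, ∑ m ∈ Finset.range (n+1), rho π A y m * qk π A y (n - m) y :=
            Finset.sum_congr rfl fun n _ => renewal hy n
        _ ≤ ∑ m ∈ Finset.range N, ∑ j ∈ Finset.range N, rho π A y m * qk π A y j y :=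
            tri_le_square _ N
        _ = (∑ m ∈ Finset.range N, rho π A y m) * (∑ j ∈ Finset.range N, qk π A y j y) := by
            rw [Finset.sum_mul]
            exact Finset.sum_congr rfl fun m _ => (Finset.mul_sum _ _ _).symm
        _ ≤ rr π A y * c⁻¹ := by
            refine mul_le_mul' ?_ ih
            exact Summable.sum_le_tsum _ (fun _ _ => zero_le) ENNReal.summable
    calc ∑ n ∈ Finset.range N, qk π A y (n+1) y + qk π A y 0 y
        ≤ rr π A y * c⁻¹ + 1 := by
          rw [h0]; exact add_le_add_left hstep 1
      _ ≤ c⁻¹ := by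
          have hcB : c * c⁻¹ = 1 := ENNReal.mul_inv_cancel hc0 hctop
          calc rr π A y * c⁻¹ + 1 = rr π A y * c⁻¹ + c * c⁻¹ := by rw [hcB]
            _ = (rr π A y + c) * c⁻¹ := by rw [add_mul]
            _ ≤ 1 * c⁻¹ := mul_le_mul_left hrc _
            _ = c⁻¹ := one_mul _

/-- reindexing: ∑' over n of triangle sums = product of tsums. -/
lemma tsum_triangle (u : ℕ → ℕ → ℝ≥0∞) :
    ∑' n, ∑ m ∈ Finset.range (n+1), u m (n - m) = (∑' m, ∑' j, u m j) := by
  have step1 : ∀ n, ∑ m ∈ Finset.range (n+1), u m (n - m)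
      = ∑' m, if m ≤ n then u m (n - m) else 0 := by
    intro n
    rw [tsum_eq_sum (s := Finset.range (n+1))]
    · exact Finset.sum_congr rfl fun m hm => by
        rw [if_pos (Nat.lt_succ_iff.mp (Finset.mem_range.mp hm))]
    · intro m hm
      rw [if_neg]; exact fun h => hm (Finset.mem_range.mpr (Nat.lt_succ_iff.mpr h))
  calc ∑' n, ∑ m ∈ Finset.range (n+1), u m (n - m)
      = ∑' n, ∑' m, if m ≤ n then u m (n - m) else 0 := tsum_congr step1
    _ = ∑' m, ∑' n, if m ≤ n then u m (n - m) else 0 := ENNReal.tsum_comm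
    _ = ∑' m, ∑' j, u m j := by
        refine tsum_congr fun m => ?_
        have hinj : Function.Injective (fun j => m + j) := fun a b h => by
          simpa using h
        rw [← hinj.tsum_eq (f := fun n => if m ≤ n then u m (n - m) else 0)]
        · refine tsum_congr fun j => ?_
          rw [if_pos (Nat.le_add_right m j)]
          congr 1; omega
        · intro n hn
          rcases le_or_gt m n with h | h
          · exact ⟨n - m, by simpa using Nat.add_sub_cancel' h⟩
          · exact absurd (if_neg (by omega)) (Function.mem_support.mp hn)

/-- the Green function bound, given the return-weight bound. -/
lemma green_le (hπ : IsPMF π) (hy : y ∉ A) {c : ℝ≥0∞} (hc0 : c ≠ 0) (hctop : c ≠ ⊤)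
    (hrc : rr π A y + c ≤ 1) (x : ℤ) :
    ∑' n, qk π A y n x ≤ c⁻¹ := by
  have hL : ∑' j, qk π A y j y ≤ c⁻¹ :=
    Summable.tsum_le_of_sum_range_le ENNReal.summable (loop_partial_le hy hc0 hctop hrc)
  calc ∑' n, qk π A y n x
      = ∑' n, ∑ m ∈ Finset.range (n+1), fp π A y m x * qk π A y (n - m) y :=
        tsum_congr fun n => identity1 n x
    _ = ∑' m, ∑' j, fp π A y m x * qk π A y j y :=
        tsum_triangle (fun m j => fp π A y m x * qk π A y j y)
    _ = ∑' m, fp π A y m x * ∑' j, qk π A y j y := tsum_congr fun m => ENNReal.tsum_mul_left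
    _ = hfun π A y x * ∑' j, qk π A y j y := ENNReal.tsum_mul_right
    _ ≤ 1 * c⁻¹ := mul_le_mul' (hfun_le_one hπ x) hL
    _ = c⁻¹ := one_mul _


section shift
lemma tsum_shift (hπ : IsPMF π) (a : ℤ) : ∑' b : ℤ, π (b - a) = 1 := by
  have := (Equiv.addRight a).tsum_eq (fun b => π (b - a))
  simp only [Equiv.coe_addRight, add_sub_cancel_right] at this
  rw [← this, hπ.2.tsum_eq]

lemma summable_shift (hπ : IsPMF π) (a : ℤ) : Summable (fun b : ℤ => π (b - a)) :=
  hπ.2.summable.comp_injective (fun u v h => by omega)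

lemma row_sum_le_one (hπ : IsPMF π) (T : Finset ℤ) (a : ℤ) :
    ∑ b ∈ T, π (b - a) ≤ 1 := by
  rw [← tsum_shift hπ a]
  exact Summable.sum_le_tsum T (fun b _ => hπ.1 _) (summable_shift hπ a)

lemma tsum_shift' (hπ : IsPMF π) (b : ℤ) : ∑' a : ℤ, π (b - a) = 1 := by
  have := (Equiv.subLeft b).tsum_eq (fun u : ℤ => π u)
  simp only [Equiv.subLeft_apply] at this
  rw [this, hπ.2.tsum_eq]

lemma summable_shift' (hπ : IsPMF π) (b : ℤ) : Summable (fun a : ℤ => π (b - a)) :=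
  hπ.2.summable.comp_injective (fun u v h => by omega)

lemma col_sum_le_one (hπ : IsPMF π) (T : Finset ℤ) (b : ℤ) :
    ∑ a ∈ T, π (b - a) ≤ 1 := by
  rw [← tsum_shift' hπ b]
  exact Summable.sum_le_tsum T (fun a _ => hπ.1 _) (summable_shift' hπ b)
end shift

/-- The key return-weight estimate via Dirichlet energy and Cauchy–Schwarz. -/
lemma return_bound (hπ : IsPMF π) (hsymm : ∀ x, π (-x) = π x) (hpos : ∀ x, 0 < π x)
    (hy : y ∉ A) (h0A : (0:ℤ) ∈ A) (T : Finset ℤ)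
    (hT : ∀ z : ℤ, z ∉ A → z ∈ T)
    (hchain : ∀ k : ℕ, k ≤ y.natAbs → (Int.sign y * k) ∈ T) :
    rr π A y + ENNReal.ofReal (π 1 / y.natAbs) ≤ 1 := by
  have hy0 : y ≠ 0 := fun h => hy (h ▸ h0A)
  set m : ℕ := y.natAbs with hm
  have hm1 : 1 ≤ m := Int.natAbs_pos.mpr hy0
  have hmR : (0:ℝ) < (m:ℝ) := by positivity
  set H : ℤ → ℝ := fun z => (hfun π A y z).toReal with hH
  have hfin : ∀ z, hfun π A y z ≠ ⊤ := fun z => (lt_of_le_of_lt (hfun_le_one hπ z) (by norm_num)).ne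
  have hH0 : ∀ z, 0 ≤ H z := fun z => ENNReal.toReal_nonneg
  have hHy : H y = 1 := by rw [hH]; simp [hfun_self hy]
  have hHA : ∀ z, z ∈ A → H z = 0 := fun z hz => by rw [hH]; simp [hfun_mem hz]
  -- real harmonicity
  have hharm : ∀ z, z ∉ A → z ≠ y → H z = ∑ w ∈ T, π (w - z) * H w := by
    intro z hzA hzy
    have h1 : hfun π A y z = ∑ w ∈ T, pk π z w * hfun π A y w := by
      rw [hfun_harmonic hzA hzy]
      refine tsum_eq_sum fun w hw => ?_
      have : hfun π A y w = 0 := hfun_mem (by by_contra hc; exact hw (hT w hc))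
      rw [this, mul_zero]
    have h2 : ∀ w ∈ T, pk π z w * hfun π A y w ≠ ⊤ :=
      fun w _ => ENNReal.mul_ne_top ENNReal.ofReal_ne_top (hfin w)
    calc H z = (∑ w ∈ T, pk π z w * hfun π A y w).toReal := by rw [hH]; simp [← h1]
      _ = ∑ w ∈ T, (pk π z w * hfun π A y w).toReal := ENNReal.toReal_sum h2
      _ = ∑ w ∈ T, π (w - z) * H w := by
          refine Finset.sum_congr rfl fun w _ => ?_
          rw [ENNReal.toReal_mul, pk, ENNReal.toReal_ofReal (hπ.1 _)]
  -- rr in terms of H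
  set R : ℝ := ∑ w ∈ T, π (w - y) * H w with hR
  have hrR : rr π A y = ENNReal.ofReal R := by
    have h1 : rr π A y = ∑' w, pk π y w * hfun π A y w := by
      rw [rr]
      calc ∑' m', rho π A y m' = ∑' m', ∑' w, pk π y w * fp π A y m' w := rfl
        _ = ∑' w, ∑' m', pk π y w * fp π A y m' w := ENNReal.tsum_comm
        _ = ∑' w, pk π y w * hfun π A y w := tsum_congr fun w => ENNReal.tsum_mul_left
    rw [h1]
    have h2 : ∑' w, pk π y w * hfun π A y w = ∑ w ∈ T, pk π y w * hfun π A y w := by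
      refine tsum_eq_sum fun w hw => ?_
      have : hfun π A y w = 0 := hfun_mem (by by_contra hc; exact hw (hT w hc))
      rw [this, mul_zero]
    rw [h2, hR, ENNReal.ofReal_sum_of_nonneg (fun w _ => mul_nonneg (hπ.1 _) (hH0 w))]
    refine Finset.sum_congr rfl fun w _ => ?_
    rw [ENNReal.ofReal_mul (hπ.1 _), pk]
    congr 1
    rw [← ENNReal.ofReal_toReal (hfin w)]
  have hyT : y ∈ T := hT y hy
  -- claim 1 : the "flux at y" identity
  have claim1 : ∑ a ∈ T, H a * (H a - ∑ z ∈ T, π (z - a) * H z) = 1 - R := by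
    rw [Finset.sum_eq_single_of_mem y hyT]
    · rw [hHy, one_mul, ← hR]
    · intro a _ hay
      by_cases hHa : H a = 0
      · rw [hHa, zero_mul]
      · have haA : a ∉ A := fun hc => hHa (hHA a hc)
        rw [← hharm a haA hay, sub_self, mul_zero]
  have expandPhi : ∑ a ∈ T, H a * (H a - ∑ z ∈ T, π (z - a) * H z)
      = (∑ a ∈ T, (H a)^2) - ∑ a ∈ T, ∑ b ∈ T, π (b - a) * (H a * H b) := by
    rw [← Finset.sum_sub_distrib]
    refine Finset.sum_congr rfl fun a _ => ?_
    rw [mul_sub, sq, Finset.mul_sum]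
    congr 1
    exact Finset.sum_congr rfl fun b _ => by ring
  -- claim 2 : energy comparison
  have hQd_le : ∑ a ∈ T, ∑ b ∈ T, π (b - a) * (H a - H b)^2
      ≤ 2 * ∑ a ∈ T, H a * (H a - ∑ z ∈ T, π (z - a) * H z) := by
    have inner : ∀ a ∈ T, ∑ b ∈ T, π (b - a) * (H a - H b)^2
        = (H a)^2 * (∑ b ∈ T, π (b - a)) + (∑ b ∈ T, π (b - a) * (H b)^2)
          - 2 * ∑ b ∈ T, π (b - a) * (H a * H b) := by
      intro a _
      have e : ∀ b ∈ T, π (b - a) * (H a - H b)^2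
          = (H a)^2 * π (b - a) + π (b - a) * (H b)^2 - 2 * (π (b - a) * (H a * H b)) :=
        fun b _ => by ring
      rw [Finset.sum_congr rfl e, Finset.sum_sub_distrib, Finset.sum_add_distrib,
        ← Finset.mul_sum, ← Finset.mul_sum]
    have swapmid : ∑ a ∈ T, ∑ b ∈ T, π (b - a) * (H b)^2
        = ∑ b ∈ T, (H b)^2 * (∑ a ∈ T, π (b - a)) := by
      rw [Finset.sum_comm]
      refine Finset.sum_congr rfl fun b _ => ?_
      rw [Finset.mul_sum]
      exact Finset.sum_congr rfl fun a _ => mul_comm _ _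
    have hexp : ∑ a ∈ T, ∑ b ∈ T, π (b - a) * (H a - H b)^2
        = (∑ a ∈ T, (H a)^2 * (∑ b ∈ T, π (b - a)))
          + (∑ b ∈ T, (H b)^2 * (∑ a ∈ T, π (b - a)))
          - 2 * ∑ a ∈ T, ∑ b ∈ T, π (b - a) * (H a * H b) := by
      rw [Finset.sum_congr rfl inner, Finset.sum_sub_distrib, Finset.sum_add_distrib,
        ← Finset.mul_sum, swapmid]
    rw [hexp, expandPhi]
    have h1 : ∑ a ∈ T, (H a)^2 * (∑ b ∈ T, π (b - a)) ≤ ∑ a ∈ T, (H a)^2 :=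
      Finset.sum_le_sum fun a _ => by
        calc (H a)^2 * (∑ b ∈ T, π (b - a)) ≤ (H a)^2 * 1 :=
              mul_le_mul_of_nonneg_left (row_sum_le_one hπ T a) (sq_nonneg _)
          _ = (H a)^2 := mul_one _
    have h2 : ∑ b ∈ T, (H b)^2 * (∑ a ∈ T, π (b - a)) ≤ ∑ b ∈ T, (H b)^2 :=
      Finset.sum_le_sum fun b _ => by
        calc (H b)^2 * (∑ a ∈ T, π (b - a)) ≤ (H b)^2 * 1 :=
              mul_le_mul_of_nonneg_left (col_sum_le_one hπ T b) (sq_nonneg _)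
          _ = (H b)^2 := mul_one _
    linarith [h1, h2]
  -- the chain and Cauchy–Schwarz
  set s : ℤ := Int.sign y with hs
  have hsy : s * (m:ℤ) = y := by rw [hs, hm]; exact Int.sign_mul_natAbs y
  have hs1 : s = 1 ∨ s = -1 := by
    rcases lt_trichotomy y 0 with h | h | h
    · right; rw [hs]; exact Int.sign_eq_neg_one_of_neg h
    · exact absurd h hy0
    · left; rw [hs]; exact Int.sign_eq_one_of_pos h
  have hπs : π s = π 1 := by
    rcases hs1 with h | h
    · rw [h]
    · rw [h]; exact hsymm 1
  have hπns : π (-s) = π 1 := by rw [hsymm s, hπs]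
  have htel : ∑ k ∈ Finset.range m, (H (s * ((k+1:ℕ):ℤ)) - H (s * ((k:ℕ):ℤ))) = 1 := by
    have ht := Finset.sum_range_sub (fun k : ℕ => H (s * ((k:ℕ):ℤ))) m
    have h0' : H (s * ((0:ℕ):ℤ)) = 0 := by simpa using hHA 0 h0A
    rw [ht, h0', hsy, hHy, sub_zero]
  have hCS : (1:ℝ) ≤ (m:ℝ) * ∑ k ∈ Finset.range m,
      (H (s * ((k+1:ℕ):ℤ)) - H (s * ((k:ℕ):ℤ)))^2 := by
    have hcs := Finset.sum_mul_sq_le_sq_mul_sq (Finset.range m)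
      (fun k => H (s * ((k+1:ℕ):ℤ)) - H (s * ((k:ℕ):ℤ))) (fun _ => 1)
    simp only [mul_one, one_pow, Finset.sum_const, Finset.card_range, nsmul_eq_mul] at hcs
    rw [htel] at hcs
    calc (1:ℝ) = 1^2 := by norm_num
      _ ≤ (∑ k ∈ Finset.range m, (H (s * ((k+1:ℕ):ℤ)) - H (s * ((k:ℕ):ℤ)))^2) * m := by
          simpa using hcs
      _ = (m:ℝ) * _ := mul_comm _ _
  -- selection of nearest-neighbour pairs along the chain
  have hsel : 2 * π 1 * ∑ k ∈ Finset.range m, (H (s * ((k+1:ℕ):ℤ)) - H (s * ((k:ℕ):ℤ)))^2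
      ≤ ∑ a ∈ T, ∑ b ∈ T, π (b - a) * (H a - H b)^2 := by
    have hFnn : ∀ q : ℤ × ℤ, 0 ≤ π (q.2 - q.1) * (H q.1 - H q.2)^2 :=
      fun q => mul_nonneg (hπ.1 _) (sq_nonneg _)
    have hQdF : ∑ a ∈ T, ∑ b ∈ T, π (b - a) * (H a - H b)^2
        = ∑ q ∈ T ×ˢ T, π (q.2 - q.1) * (H q.1 - H q.2)^2 := by
      rw [Finset.sum_product]
    have hsne : s ≠ 0 := by rcases hs1 with h | h <;> simp [h]
    have hinj1 : ∀ a ∈ Finset.range m, ∀ b ∈ Finset.range m,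
        ((s * ((a:ℕ):ℤ), s * ((a+1:ℕ):ℤ)) : ℤ × ℤ) = (s * ((b:ℕ):ℤ), s * ((b+1:ℕ):ℤ)) → a = b := by
      intro a _ b _ h
      rw [Prod.mk.injEq] at h
      have h1 := h.1
      have : ((a:ℕ):ℤ) = ((b:ℕ):ℤ) := by
        rcases hs1 with hh | hh <;> rw [hh] at h1 <;> omega
      exact_mod_cast this
    have hinj2 : ∀ a ∈ Finset.range m, ∀ b ∈ Finset.range m,
        ((s * ((a+1:ℕ):ℤ), s * ((a:ℕ):ℤ)) : ℤ × ℤ) = (s * ((b+1:ℕ):ℤ), s * ((b:ℕ):ℤ)) → a = b := by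
      intro a _ b _ h
      rw [Prod.mk.injEq] at h
      have h2 := h.2
      have : ((a:ℕ):ℤ) = ((b:ℕ):ℤ) := by
        rcases hs1 with hh | hh <;> rw [hh] at h2 <;> omega
      exact_mod_cast this
    set S1 : Finset (ℤ × ℤ) :=
      (Finset.range m).image (fun k : ℕ => ((s * ((k:ℕ):ℤ), s * ((k+1:ℕ):ℤ)) : ℤ × ℤ)) with hS1
    set S2 : Finset (ℤ × ℤ) :=
      (Finset.range m).image (fun k : ℕ => ((s * ((k+1:ℕ):ℤ), s * ((k:ℕ):ℤ)) : ℤ × ℤ)) with hS2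
    have hdisj : Disjoint S1 S2 := by
      rw [Finset.disjoint_left]
      intro q hq1 hq2
      rw [hS1, Finset.mem_image] at hq1
      rw [hS2, Finset.mem_image] at hq2
      rcases hq1 with ⟨k, _, rfl⟩
      rcases hq2 with ⟨k', _, hk'⟩
      rw [Prod.mk.injEq] at hk'
      have h1 := hk'.1
      have h2 := hk'.2
      rcases hs1 with hh | hh <;> rw [hh] at h1 h2 <;> omega
    have hsub : S1 ∪ S2 ⊆ T ×ˢ T := by
      refine Finset.union_subset ?_ ?_
      · rw [hS1]
        intro q hq
        rcases Finset.mem_image.mp hq with ⟨k, hk, rfl⟩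
        rw [Finset.mem_range] at hk
        exact Finset.mem_product.mpr ⟨hchain k (le_of_lt hk), hchain (k+1) (by omega)⟩
      · rw [hS2]
        intro q hq
        rcases Finset.mem_image.mp hq with ⟨k, hk, rfl⟩
        rw [Finset.mem_range] at hk
        exact Finset.mem_product.mpr ⟨hchain (k+1) (by omega), hchain k (le_of_lt hk)⟩
    have hsum1 : ∑ q ∈ S1, π (q.2 - q.1) * (H q.1 - H q.2)^2
        = π 1 * ∑ k ∈ Finset.range m, (H (s * ((k+1:ℕ):ℤ)) - H (s * ((k:ℕ):ℤ)))^2 := by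
      rw [hS1, Finset.sum_image hinj1, Finset.mul_sum]
      refine Finset.sum_congr rfl fun k _ => ?_
      have harg : s * ((k+1:ℕ):ℤ) - s * ((k:ℕ):ℤ) = s := by push_cast; ring
      rw [harg, hπs]
      congr 1
      ring
    have hsum2 : ∑ q ∈ S2, π (q.2 - q.1) * (H q.1 - H q.2)^2
        = π 1 * ∑ k ∈ Finset.range m, (H (s * ((k+1:ℕ):ℤ)) - H (s * ((k:ℕ):ℤ)))^2 := by
      rw [hS2, Finset.sum_image hinj2, Finset.mul_sum]
      refine Finset.sum_congr rfl fun k _ => ?_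
      have harg : s * ((k:ℕ):ℤ) - s * ((k+1:ℕ):ℤ) = -s := by push_cast; ring
      rw [harg, hπns]
    calc 2 * π 1 * ∑ k ∈ Finset.range m, (H (s * ((k+1:ℕ):ℤ)) - H (s * ((k:ℕ):ℤ)))^2
        = ∑ q ∈ S1, π (q.2 - q.1) * (H q.1 - H q.2)^2
          + ∑ q ∈ S2, π (q.2 - q.1) * (H q.1 - H q.2)^2 := by
          rw [hsum1, hsum2]; ring
      _ = ∑ q ∈ S1 ∪ S2, π (q.2 - q.1) * (H q.1 - H q.2)^2 := (Finset.sum_union hdisj).symm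
      _ ≤ ∑ q ∈ T ×ˢ T, π (q.2 - q.1) * (H q.1 - H q.2)^2 :=
          Finset.sum_le_sum_of_subset_of_nonneg hsub (fun q _ _ => hFnn q)
      _ = ∑ a ∈ T, ∑ b ∈ T, π (b - a) * (H a - H b)^2 := hQdF.symm
  -- put it together
  have hπ1 : 0 < π 1 := hpos 1
  have hfinal : R + π 1 / m ≤ 1 := by
    have h1 : π 1 / m ≤ π 1 * ∑ k ∈ Finset.range m,
        (H (s * ((k+1:ℕ):ℤ)) - H (s * ((k:ℕ):ℤ)))^2 := by
      rw [div_le_iff₀ hmR]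
      calc π 1 = π 1 * 1 := (mul_one _).symm
        _ ≤ π 1 * ((m:ℝ) * ∑ k ∈ Finset.range m,
              (H (s * ((k+1:ℕ):ℤ)) - H (s * ((k:ℕ):ℤ)))^2) :=
            mul_le_mul_of_nonneg_left hCS (le_of_lt hπ1)
        _ = π 1 * (∑ k ∈ Finset.range m,
              (H (s * ((k+1:ℕ):ℤ)) - H (s * ((k:ℕ):ℤ)))^2) * m := by ring
    have h2 : π 1 * ∑ k ∈ Finset.range m,
        (H (s * ((k+1:ℕ):ℤ)) - H (s * ((k:ℕ):ℤ)))^2 ≤ 1 - R := by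
      linarith [hsel, hQd_le, claim1]
    linarith
  have hRnn : 0 ≤ R := by
    rw [hR]
    exact Finset.sum_nonneg fun w _ => mul_nonneg (hπ.1 _) (hH0 w)
  rw [hrR, ← ENNReal.ofReal_add hRnn (by positivity), ← ENNReal.ofReal_one]
  exact ENNReal.ofReal_le_ofReal hfinal


noncomputable def wpath (π : ℤ → ℝ) {n : ℕ} (v : Fin (n+1) → ℤ) : ℝ≥0∞ :=
  ∏ i : Fin n, pk π (v i.castSucc) (v i.succ)

noncomputable def Sfun (π : ℤ → ℝ) (A : Set ℤ) (y : ℤ) (n : ℕ) (x : ℤ) : ℝ≥0∞ :=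
  ∑' v : Fin (n+1) → ℤ,
    if v 0 = x ∧ (∀ i, v i ∉ A) ∧ v (Fin.last n) = y then wpath π v else 0

variable {π : ℤ → ℝ} {A : Set ℤ} {y x : ℤ}

lemma wpath_cons (w : ℤ) {n : ℕ} (u : Fin (n+1) → ℤ) :
    wpath π (Fin.cons w u) = pk π w (u 0) * wpath π u := by
  rw [wpath, Fin.prod_univ_succ, wpath]
  simp [← Fin.succ_castSucc]

lemma Sfun_eq_qk (n : ℕ) (x : ℤ) : Sfun π A y n x = qk π A y n x := by
  induction n generalizing x with
  | zero =>
    rw [Sfun]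
    rw [← (Equiv.funUnique (Fin 1) ℤ).symm.tsum_eq]
    have heval : ∀ z : ℤ, ((Equiv.funUnique (Fin 1) ℤ).symm z : Fin 1 → ℤ) = fun _ => z :=
      fun z => rfl
    calc ∑' z : ℤ, (if (fun (_ : Fin 1) => z) 0 = x ∧ (∀ i : Fin 1, (fun _ => z) i ∉ A) ∧
            (fun (_ : Fin 1) => z) (Fin.last 0) = y then wpath π (fun _ => z) else 0)
        = ∑' z : ℤ, (if z = x ∧ z ∉ A ∧ z = y then 1 else 0) := by
          refine tsum_congr fun z => ?_
          have hw : wpath π (fun _ : Fin 1 => z) = 1 := by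
            rw [wpath]; simp
          rw [hw]
          refine if_congr ?_ rfl rfl
          constructor
          · rintro ⟨h1, h2, h3⟩; exact ⟨h1, h2 0, h3⟩
          · rintro ⟨h1, h2, h3⟩; exact ⟨h1, fun _ => h2, h3⟩
      _ = qk π A y 0 x := by
          rw [tsum_eq_single x]
          · simp [qk]
          · intro z hz
            rw [if_neg]; rintro ⟨h1, _⟩; exact hz h1
  | succ n ih =>
    have key : Sfun π A y (n+1) x
        = ∑' (w : ℤ), ∑' (u : Fin (n+1) → ℤ),
            (if w = x ∧ (w ∉ A ∧ ∀ i, u i ∉ A) ∧ u (Fin.last n) = y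
             then pk π w (u 0) * wpath π u else 0) := by
      rw [Sfun, ← (Fin.consEquiv (fun _ : Fin (n+2) => ℤ)).tsum_eq]
      have h2 : ∀ c : ℤ × (Fin (n+1) → ℤ),
          (if ((Fin.consEquiv (fun _ : Fin (n+2) => ℤ)) c) 0 = x ∧
              (∀ i, ((Fin.consEquiv (fun _ : Fin (n+2) => ℤ)) c) i ∉ A) ∧
              ((Fin.consEquiv (fun _ : Fin (n+2) => ℤ)) c) (Fin.last (n+1)) = y
           then wpath π ((Fin.consEquiv (fun _ : Fin (n+2) => ℤ)) c) else 0)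
          = (fun (w : ℤ) (u : Fin (n+1) → ℤ) =>
              (if w = x ∧ (w ∉ A ∧ ∀ i, u i ∉ A) ∧ u (Fin.last n) = y
               then pk π w (u 0) * wpath π u else 0)) c.1 c.2 := by
        rintro ⟨w, u⟩
        have happ : ((Fin.consEquiv (fun _ : Fin (n+2) => ℤ)) (w, u) : Fin (n+2) → ℤ)
            = Fin.cons w u := by
          funext i; exact Fin.consEquiv_apply _ _ _
        rw [happ]
        have hc0 : (Fin.cons w u : Fin (n+2) → ℤ) 0 = w := Fin.cons_zero _ _
        have hclast : (Fin.cons w u : Fin (n+2) → ℤ) (Fin.last (n+1)) = u (Fin.last n) := by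
          rw [← Fin.succ_last, Fin.cons_succ]
        have hall : (∀ i, (Fin.cons w u : Fin (n+2) → ℤ) i ∉ A) ↔ (w ∉ A ∧ ∀ i, u i ∉ A) := by
          rw [Fin.forall_fin_succ]
          simp only [Fin.cons_zero, Fin.cons_succ]
        rw [wpath_cons]
        exact if_congr (by rw [hc0, hclast, hall]) rfl rfl
      rw [tsum_congr h2]
      exact ENNReal.tsum_prod (f := fun (w : ℤ) (u : Fin (n+1) → ℤ) =>
        (if w = x ∧ (w ∉ A ∧ ∀ i, u i ∉ A) ∧ u (Fin.last n) = y
         then pk π w (u 0) * wpath π u else 0))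
    rw [key]
    have hcollapse : ∀ (f : ℤ → ℝ≥0∞),
        (∑' w : ℤ, ∑' (u : Fin (n+1) → ℤ),
          (if w = x ∧ (w ∉ A ∧ ∀ i, u i ∉ A) ∧ u (Fin.last n) = y
           then pk π w (u 0) * wpath π u else 0))
        = ∑' (u : Fin (n+1) → ℤ),
            (if x ∉ A ∧ (∀ i, u i ∉ A) ∧ u (Fin.last n) = y
             then pk π x (u 0) * wpath π u else 0) := by
      intro _
      rw [tsum_eq_single x]
      · refine tsum_congr fun u => if_congr ?_ rfl rfl
        constructor
        · rintro ⟨_, ⟨h2, h3⟩, h4⟩; exact ⟨h2, h3, h4⟩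
        · rintro ⟨h2, h3, h4⟩; exact ⟨rfl, ⟨h2, h3⟩, h4⟩
      · intro w hw
        rw [ENNReal.tsum_eq_zero]
        intro u
        rw [if_neg]; rintro ⟨h1, _⟩; exact hw h1
    rw [hcollapse (fun _ => 0)]
    by_cases hxA : x ∈ A
    · have h1 : qk π A y (n+1) x = 0 := by
        rw [show qk π A y (n+1) x = if x ∉ A then ∑' w, pk π x w * qk π A y n w else 0 from rfl,
          if_neg (by simpa using hxA)]
      rw [h1, ENNReal.tsum_eq_zero]
      intro u
      rw [if_neg]; rintro ⟨h2, _⟩; exact h2 hxA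
    · have h1 : qk π A y (n+1) x = ∑' z, pk π x z * qk π A y n z := by
        rw [show qk π A y (n+1) x = if x ∉ A then ∑' w, pk π x w * qk π A y n w else 0 from rfl,
          if_pos hxA]
      rw [h1]
      calc ∑' (u : Fin (n+1) → ℤ),
            (if x ∉ A ∧ (∀ i, u i ∉ A) ∧ u (Fin.last n) = y
             then pk π x (u 0) * wpath π u else 0)
          = ∑' (u : Fin (n+1) → ℤ), ∑' z : ℤ,
              (if u 0 = z ∧ (∀ i, u i ∉ A) ∧ u (Fin.last n) = y
               then pk π x z * wpath π u else 0) := by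
            refine tsum_congr fun u => ?_
            rw [tsum_eq_single (u 0)]
            · refine if_congr ?_ rfl rfl
              constructor
              · rintro ⟨_, h2, h3⟩; exact ⟨rfl, h2, h3⟩
              · rintro ⟨_, h2, h3⟩; exact ⟨hxA, h2, h3⟩
            · intro z hz
              rw [if_neg]; rintro ⟨h1', _⟩; exact hz (h1' ▸ rfl)
        _ = ∑' z : ℤ, ∑' (u : Fin (n+1) → ℤ),
              (if u 0 = z ∧ (∀ i, u i ∉ A) ∧ u (Fin.last n) = y
               then pk π x z * wpath π u else 0) := ENNReal.tsum_comm
        _ = ∑' z : ℤ, pk π x z * qk π A y n z := by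
            refine tsum_congr fun z => ?_
            rw [← ih z, Sfun, ← ENNReal.tsum_mul_left]
            refine tsum_congr fun u => ?_
            rw [mul_ite, mul_zero]
    done


/-- the event: avoid `A` up to time `n` and be at `y` at time `n`. -/
def Ev (A : Set ℤ) (y : ℤ) (n : ℕ) : Set (ℕ → ℤ) := {ω | (∀ i ≤ n, ω i ∉ A) ∧ ω n = y}

def extv {n : ℕ} (v : Fin (n+1) → ℤ) : ℕ → ℤ :=
  fun i => if h : i ≤ n then v ⟨i, Nat.lt_succ_of_le h⟩ else 0

lemma extv_le {n : ℕ} (v : Fin (n+1) → ℤ) {i : ℕ} (h : i ≤ n) :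
    extv v i = v ⟨i, Nat.lt_succ_of_le h⟩ := dif_pos h

lemma cylinder_measurable (n : ℕ) (a : ℕ → ℤ) :
    MeasurableSet {ω : ℕ → ℤ | ∀ i ≤ n, ω i = a i} := by
  have h : {ω : ℕ → ℤ | ∀ i ≤ n, ω i = a i}
      = ⋂ i, ⋂ (_ : i ≤ n), (fun ω : ℕ → ℤ => ω i) ⁻¹' {a i} := by
    ext ω; simp
  rw [h]
  exact MeasurableSet.iInter fun i => MeasurableSet.iInter fun _ =>
    (measurable_pi_apply i) (measurableSet_singleton _)

lemma Ev_measurable (A : Set ℤ) (y : ℤ) (n : ℕ) : MeasurableSet (Ev A y n) := by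
  have h : Ev A y n
      = (⋂ i, ⋂ (_ : i ≤ n), (fun ω : ℕ → ℤ => ω i) ⁻¹' Aᶜ)
        ∩ ((fun ω : ℕ → ℤ => ω n) ⁻¹' {y}) := by
    ext ω
    simp [Ev, Set.mem_iInter]
  rw [h]
  refine MeasurableSet.inter ?_ ((measurable_pi_apply n) (measurableSet_singleton _))
  exact MeasurableSet.iInter fun i => MeasurableSet.iInter fun _ =>
    (measurable_pi_apply i) ((Set.to_countable A).measurableSet.compl)

lemma measure_event (hπ : IsPMF π) (Q : ℤ → Measure (ℕ → ℤ))
    (hcyl : ∀ (x : ℤ) (n : ℕ) (a : ℕ → ℤ),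
      Q x {ω | ∀ i ≤ n, ω i = a i} =
        if a 0 = x then
          ENNReal.ofReal (∏ i ∈ Finset.range n, π (a (i + 1) - a i))
        else 0)
    (A : Set ℤ) (y : ℤ) (n : ℕ) (x : ℤ) :
    Q x (Ev A y n) = Sfun π A y n x := by
  set U : (Fin (n+1) → ℤ) → Set (ℕ → ℤ) := fun v =>
    if (∀ i, v i ∉ A) ∧ v (Fin.last n) = y
    then {ω | ∀ i ≤ n, ω i = extv v i} else ∅ with hU
  have hEv : Ev A y n = ⋃ v, U v := by
    ext ω
    simp only [Set.mem_iUnion]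
    constructor
    · rintro ⟨h1, h2⟩
      refine ⟨fun i => ω i, ?_⟩
      have hc : (∀ i : Fin (n+1), ω (i:ℕ) ∉ A)
          ∧ (fun i : Fin (n+1) => ω (i:ℕ)) (Fin.last n) = y :=
        ⟨fun i => h1 i (Nat.lt_succ_iff.mp i.isLt), by simpa using h2⟩
      rw [hU]
      simp only [if_pos hc]
      intro i hi
      rw [extv_le _ hi]
    · rintro ⟨v, hv⟩
      rw [hU] at hv
      by_cases hc : (∀ i, v i ∉ A) ∧ v (Fin.last n) = y
      · simp only [if_pos hc] at hv
        constructor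
        · intro i hi
          have := hv i hi
          rw [extv_le v hi] at this
          rw [this]
          exact hc.1 _
        · have := hv n le_rfl
          rw [extv_le v le_rfl] at this
          rw [this]
          exact hc.2
      · simp only [if_neg hc] at hv
        exact absurd hv (Set.notMem_empty ω)
  have hdisj : Pairwise (Function.onFun Disjoint U) := by
    intro v v' hne
    simp only [Function.onFun, hU]
    by_cases hc : (∀ i, v i ∉ A) ∧ v (Fin.last n) = y
    · by_cases hc' : (∀ i, v' i ∉ A) ∧ v' (Fin.last n) = y
      · simp only [if_pos hc, if_pos hc']
        rw [Set.disjoint_left]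
        intro ω h1 h2
        obtain ⟨j, hj⟩ : ∃ j, v j ≠ v' j := by
          by_contra hcon
          push_neg at hcon
          exact hne (funext hcon)
        apply hj
        have e1 := h1 (j:ℕ) (Nat.lt_succ_iff.mp j.isLt)
        have e2 := h2 (j:ℕ) (Nat.lt_succ_iff.mp j.isLt)
        rw [extv_le v (Nat.lt_succ_iff.mp j.isLt)] at e1
        rw [extv_le v' (Nat.lt_succ_iff.mp j.isLt)] at e2
        rw [Fin.eta] at e1 e2
        rw [← e1, ← e2]
      · simp only [if_neg hc']
        exact Set.disjoint_empty _
    · simp only [if_neg hc]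
      exact Set.empty_disjoint _
  have hmeas : ∀ v, MeasurableSet (U v) := by
    intro v
    rw [hU]
    by_cases hc : (∀ i, v i ∉ A) ∧ v (Fin.last n) = y
    · simp only [if_pos hc]; exact cylinder_measurable n (extv v)
    · simp only [if_neg hc]; exact MeasurableSet.empty
  rw [hEv, measure_iUnion hdisj hmeas, Sfun]
  refine tsum_congr fun v => ?_
  rw [hU]
  by_cases hc : (∀ i, v i ∉ A) ∧ v (Fin.last n) = y
  · simp only [if_pos hc]
    rw [hcyl x n (extv v)]
    have h0 : extv v 0 = v 0 := extv_le v (Nat.zero_le n)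
    have hprod : ENNReal.ofReal (∏ i ∈ Finset.range n, π (extv v (i + 1) - extv v i))
        = wpath π v := by
      rw [ENNReal.ofReal_prod_of_nonneg (fun i _ => hπ.1 _)]
      rw [wpath, ← Fin.prod_univ_eq_prod_range
        (fun i => ENNReal.ofReal (π (extv v (i+1) - extv v i))) n]
      refine Finset.prod_congr rfl fun i _ => ?_
      have e1 : extv v ((i:ℕ)+1) = v i.succ := by
        rw [extv_le v (Nat.succ_le_of_lt i.isLt)]
        congr 1
      have e2 : extv v (i:ℕ) = v i.castSucc := by
        rw [extv_le v (Nat.le_of_lt i.isLt)]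
        congr 1
      rw [e1, e2, pk]
    rw [hprod, h0]
    by_cases hx : v 0 = x
    · rw [if_pos hx, if_pos ⟨hx, hc⟩]
    · rw [if_neg hx, if_neg (fun hcon => hx hcon.1)]
  · simp only [if_neg hc, if_neg (fun hcon : (v 0 = x ∧ (∀ i, v i ∉ A) ∧ v (Fin.last n) = y)
      => hc hcon.2)]
    exact measure_empty

lemma hitTime_gt_iff (ω : ℕ → ℤ) (n : ℕ) :
    ((n : ℕ∞) < hitTime {0} ω) ↔ ∀ i ≤ n, ω i ≠ 0 := by
  constructor
  · intro h i hi h0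
    have hle : hitTime {0} ω ≤ (i : ℕ∞) := by
      calc hitTime {0} ω ≤ ⨅ (_ : ω i ∈ ({0} : Set ℤ)), (i:ℕ∞) := iInf_le _ i
        _ ≤ (i:ℕ∞) := iInf_le _ (by simpa using h0)
    have hlt : (i : ℕ∞) < (i : ℕ∞) := by
      calc (i : ℕ∞) ≤ (n : ℕ∞) := by exact_mod_cast hi
        _ < hitTime {0} ω := h
        _ ≤ (i : ℕ∞) := hle
    exact lt_irrefl _ hlt
  · intro h
    have hge : ((n+1 : ℕ) : ℕ∞) ≤ hitTime {0} ω := by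
      refine le_iInf fun m => le_iInf fun hm => ?_
      have hnm : n < m := by
        by_contra hcon
        exact h m (by omega) (by simpa using hm)
      exact_mod_cast Nat.succ_le_of_lt hnm
    calc (n : ℕ∞) < ((n+1 : ℕ) : ℕ∞) := by exact_mod_cast Nat.lt_succ_self n
      _ ≤ hitTime {0} ω := hge

lemma tsum_iSup_comm {g : ℕ → ℕ → ℝ≥0∞} (hmono : ∀ n, Monotone (g n)) :
    ∑' n, ⨆ M, g n M = ⨆ M, ∑' n, g n M := by
  have h1 : ∑' n, ⨆ M, g n M = ∫⁻ n, ⨆ M, g n M ∂(Measure.count) :=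
    (lintegral_count _).symm
  rw [h1, lintegral_iSup (fun M => measurable_from_top) (fun M M' h n => hmono n h)]
  exact iSup_congr fun M => lintegral_count _


end RWProof

open RWProof

/-- There exists `C > 0` such that for all `x, y ∈ ℤ`, the expected number of
visits of the random walk to `y` strictly before the hitting time of `0`
satisfies `𝔼_x(#{n : n < H_0^Y, Y_n = y}) ≤ C·|y|`. -/
theorem stmt4
    (π : ℤ → ℝ)
    (hπ : IsPMF π)
    (hsymm : ∀ x, π (-x) = π x)
    (hsupp : ∀ x, 0 < π x)
    (htail : ∃ f F : ℝ, 0 < f ∧ 0 < F ∧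
      ∀ x, π x ≤ F * Real.exp (-f * |(x : ℝ)|))
    (Q : ℤ → Measure (ℕ → ℤ))
    (hQ : ∀ x, IsProbabilityMeasure (Q x))
    (hcyl : ∀ (x : ℤ) (n : ℕ) (a : ℕ → ℤ),
      Q x {ω | ∀ i ≤ n, ω i = a i} =
        if a 0 = x then
          ENNReal.ofReal (∏ i ∈ Finset.range n, π (a (i + 1) - a i))
        else 0) :
    ∃ C : ℝ, 0 < C ∧ ∀ x y : ℤ,
      ∫⁻ ω, (∑' n : ℕ,
          if (n : ℕ∞) < hitTime {0} ω ∧ ω n = y then (1 : ℝ≥0∞) else 0) ∂(Q x) ≤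
        ENNReal.ofReal (C * |(y : ℝ)|) := by
  have hπ1 : 0 < π 1 := hsupp 1
  refine ⟨(π 1)⁻¹, by positivity, fun x y => ?_⟩
  by_cases hy0 : y = 0
  · subst hy0
    have hz : ∀ ω : ℕ → ℤ, (∑' n : ℕ,
        if (n : ℕ∞) < hitTime {0} ω ∧ ω n = (0:ℤ) then (1:ℝ≥0∞) else 0) = 0 := by
      intro ω
      rw [ENNReal.tsum_eq_zero]
      intro n
      rw [if_neg]
      rintro ⟨hlt, h0⟩
      exact ((hitTime_gt_iff ω n).mp hlt n le_rfl) h0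
    rw [lintegral_congr hz, lintegral_zero]
    exact zero_le
  -- main case : y ≠ 0
  set boxA : ℕ → Set ℤ := fun M => {z : ℤ | z = 0 ∨ (M:ℤ) ≤ |z|} with hboxA
  have h0box : ∀ M, (0:ℤ) ∈ boxA M := fun M => Or.inl rfl
  -- rewrite the integrand via the events
  have hevent : ∀ ω : ℕ → ℤ, (∑' n : ℕ,
      if (n : ℕ∞) < hitTime {0} ω ∧ ω n = y then (1:ℝ≥0∞) else 0)
      = ∑' n : ℕ, (Ev {0} y n).indicator (1 : (ℕ → ℤ) → ℝ≥0∞) ω := by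
    intro ω
    refine tsum_congr fun n => ?_
    rw [Set.indicator_apply]
    have : (ω ∈ Ev {0} y n) ↔ ((n : ℕ∞) < hitTime {0} ω ∧ ω n = y) := by
      rw [Ev, Set.mem_setOf_eq]
      constructor
      · rintro ⟨h1, h2⟩
        exact ⟨(hitTime_gt_iff ω n).mpr (fun i hi => by simpa using h1 i hi), h2⟩
      · rintro ⟨h1, h2⟩
        exact ⟨fun i hi => by simpa using (hitTime_gt_iff ω n).mp h1 i hi, h2⟩
    rw [if_congr this.symm rfl rfl]
    rfl
  rw [lintegral_congr hevent,
    lintegral_tsum (fun n => ((measurable_one).indicator (Ev_measurable _ _ _)).aemeasurable)]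
  have hlin : ∀ n : ℕ, ∫⁻ ω, (Ev ({0} : Set ℤ) y n).indicator (1 : (ℕ → ℤ) → ℝ≥0∞) ω ∂(Q x)
      = Q x (Ev {0} y n) := fun n => lintegral_indicator_one (Ev_measurable _ _ _)
  rw [tsum_congr hlin]
  -- decompose over boxes
  have hmonoEv : ∀ n, Monotone (fun M => Ev (boxA M) y n) := by
    intro n M M' hMM' ω hω
    refine ⟨fun i hi hz => hω.1 i hi ?_, hω.2⟩
    rcases hz with h | h
    · exact Or.inl h
    · refine Or.inr (le_trans ?_ h)
      exact_mod_cast hMM'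
  have hunion : ∀ n, (⋃ M, Ev (boxA M) y n) = Ev {0} y n := by
    intro n
    ext ω
    simp only [Set.mem_iUnion]
    constructor
    · rintro ⟨M, h1, h2⟩
      refine ⟨fun i hi hz => h1 i hi (Or.inl (by simpa using hz)), h2⟩
    · rintro ⟨h1, h2⟩
      refine ⟨(Finset.range (n+1)).sup (fun i => (ω i).natAbs) + 1, fun i hi hz => ?_, h2⟩
      rcases hz with h | h
      · exact h1 i hi (by simpa using h)
      · have hle : (ω i).natAbs ≤ (Finset.range (n+1)).sup (fun i => (ω i).natAbs) :=
          Finset.le_sup (f := fun i => (ω i).natAbs) (Finset.mem_range.mpr (Nat.lt_succ_of_le hi))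
        have habs : |ω i| = ((ω i).natAbs : ℤ) := Int.abs_eq_natAbs _
        rw [habs] at h
        have : ((Finset.range (n+1)).sup (fun i => (ω i).natAbs) + 1 : ℤ)
            ≤ ((ω i).natAbs : ℤ) := by exact_mod_cast h
        omega
  have hsup : ∀ n, Q x (Ev ({0} : Set ℤ) y n) = ⨆ M, Q x (Ev (boxA M) y n) := by
    intro n
    rw [← hunion n]
    exact Directed.measure_iUnion ((hmonoEv n).directed_le)
  rw [tsum_congr hsup, tsum_iSup_comm (fun n M M' h => measure_mono (hmonoEv n h))]
  -- bound each box
  refine iSup_le fun M => ?_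
  have hQS : ∀ n, Q x (Ev (boxA M) y n) = qk π (boxA M) y n x :=
    fun n => (measure_event hπ Q hcyl _ y n x).trans (Sfun_eq_qk n x)
  rw [tsum_congr hQS]
  by_cases hyM : (M:ℤ) ≤ |y|
  · have hyA : y ∈ boxA M := Or.inr hyM
    have hz := qk_target_mem (π := π) hyA
    simp [hz]
  · push_neg at hyM
    have hyA : y ∉ boxA M := by
      rintro (h | h)
      · exact hy0 h
      · exact absurd h (not_le.mpr hyM)
    set T : Finset ℤ := Finset.Icc (-(M:ℤ)) (M:ℤ) with hT'
    have hT : ∀ z : ℤ, z ∉ boxA M → z ∈ T := by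
      intro z hz
      rw [hT', Finset.mem_Icc]
      have : ¬ ((M:ℤ) ≤ |z|) := fun hc => hz (Or.inr hc)
      rw [not_le, abs_lt] at this
      omega
    have hchain : ∀ k : ℕ, k ≤ y.natAbs → (Int.sign y * k) ∈ T := by
      intro k hk
      rw [hT', Finset.mem_Icc]
      have h1 : |Int.sign y * (k:ℤ)| ≤ (k:ℤ) := by
        rw [abs_mul]
        calc |Int.sign y| * |(k:ℤ)| ≤ 1 * |(k:ℤ)| := by
              refine mul_le_mul_of_nonneg_right ?_ (abs_nonneg _)
              rcases lt_trichotomy y 0 with h | h | h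
              · simp [Int.sign_eq_neg_one_of_neg h]
              · exact absurd h hy0
              · simp [Int.sign_eq_one_of_pos h]
          _ = |(k:ℤ)| := one_mul _
          _ = (k:ℤ) := abs_of_nonneg (by positivity)
      have h2 : ((y.natAbs : ℤ)) < (M:ℤ) := by
        rw [← Int.abs_eq_natAbs]; exact hyM
      have h3 : (k:ℤ) ≤ (y.natAbs:ℤ) := by exact_mod_cast hk
      rw [abs_le] at h1
      omega
    have hret := return_bound hπ hsymm hsupp hyA (h0box M) T hT hchain
    have hmy : (0:ℝ) < (y.natAbs : ℝ) := by
      have : y.natAbs ≠ 0 := Int.natAbs_ne_zero.mpr hy0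
      positivity
    have hcpos : (0:ℝ) < π 1 / (y.natAbs : ℝ) := by positivity
    have hc0 : ENNReal.ofReal (π 1 / (y.natAbs:ℝ)) ≠ 0 := by
      rw [← ENNReal.ofReal_zero]
      exact fun hcon => (ne_of_gt hcpos) (by
        have := ENNReal.ofReal_eq_ofReal_iff (le_of_lt hcpos) le_rfl |>.mp hcon
        linarith)
    have hctop : ENNReal.ofReal (π 1 / (y.natAbs:ℝ)) ≠ ⊤ := ENNReal.ofReal_ne_top
    refine le_trans (green_le hπ hyA hc0 hctop hret x) ?_
    rw [← ENNReal.ofReal_inv_of_pos hcpos]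
    apply le_of_eq
    congr 1
    rw [inv_div]
    rw [div_eq_mul_inv, mul_comm]
    congr 1
    rw [Nat.cast_natAbs]
    norm_num
  done
end

section
/- For every x ∈ ℤ and every integer k ≥ 0, ℙ_x(λ_k < H_0) ≤ (1 − δ)^{⌊k/2⌋}. -/
open MeasureTheory
open scoped Classical ENNReal

/-- `T' = inf{n ≥ 0 : {X_0, …, X_n} ∩ I ≠ ∅ and {X_0, …, X_n} ∩ Iᶜ ≠ ∅}`
where `I = [−L, L] ∩ ℤ`, with value `⊤` if no such `n` exists. -/
noncomputable def TprimeTime (L : ℤ) (ω : ℕ → ℤ) : ℕ∞ :=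
  ⨅ (n : ℕ) (_ : (∃ i ≤ n, |ω i| ≤ L) ∧ ∃ i ≤ n, L < |ω i|), (n : ℕ∞)

/-- `λ_1 = T' ∧ H_0`. -/
noncomputable def lam1 (L : ℤ) (ω : ℕ → ℤ) : ℕ∞ :=
  min (TprimeTime L ω) (hitTime {0} ω)

/-- The sequence of times `λ_0 = 0`, `λ_{k+1} = λ_k + λ_1 ∘ θ_{λ_k}`
(in `ℕ∞`, so `λ_{k+1} = ∞` whenever `λ_k = ∞`). -/
noncomputable def lamSeq (L : ℤ) : ℕ → (ℕ → ℤ) → ℕ∞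
  | 0, _ => 0
  | k + 1, ω => lamSeq L k ω + lam1 L (fun n => ω ((lamSeq L k ω).toNat + n))

namespace S12


lemma enat_eq_of_forall {a b : ℕ∞} (h : ∀ m : ℕ, a ≤ m ↔ b ≤ m) : a = b := by
  refine le_antisymm ?_ ?_
  · cases b using ENat.recTopCoe with
    | top => exact le_top
    | coe m => exact (h m).2 le_rfl
  · cases a using ENat.recTopCoe with
    | top => exact le_top
    | coe m => exact (h m).1 le_rfl

lemma hitTime_le_iff {A : Set ℤ} {ω : ℕ → ℤ} {m : ℕ} :
    hitTime A ω ≤ m ↔ ∃ i ≤ m, ω i ∈ A := by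
  constructor
  · intro h
    by_contra hc
    push_neg at hc
    have h2 : ((m + 1 : ℕ) : ℕ∞) ≤ hitTime A ω := by
      refine le_iInf fun n => le_iInf fun hn => ?_
      have : m + 1 ≤ n := by
        by_contra hn'
        push_neg at hn'
        exact hc n (Nat.lt_succ_iff.mp hn') hn
      exact_mod_cast this
    have h3 := h2.trans h
    have : m + 1 ≤ m := by exact_mod_cast h3
    omega
  · rintro ⟨i, him, hi⟩
    refine le_trans ?_ (by exact_mod_cast him : (i : ℕ∞) ≤ m)
    exact iInf_le_of_le i (iInf_le_of_le hi le_rfl)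

lemma Tprime_le_iff {L : ℤ} {ω : ℕ → ℤ} {m : ℕ} :
    TprimeTime L ω ≤ m ↔ (∃ i ≤ m, |ω i| ≤ L) ∧ ∃ i ≤ m, L < |ω i| := by
  constructor
  · intro h
    by_contra hc
    have h2 : ((m + 1 : ℕ) : ℕ∞) ≤ TprimeTime L ω := by
      refine le_iInf fun n => le_iInf fun hn => ?_
      have : m + 1 ≤ n := by
        by_contra hn'
        push_neg at hn'
        have hn'' : n ≤ m := Nat.lt_succ_iff.mp hn'
        exact hc ⟨hn.1.imp fun i hi => ⟨hi.1.trans hn'', hi.2⟩,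
          hn.2.imp fun i hi => ⟨hi.1.trans hn'', hi.2⟩⟩
      exact_mod_cast this
    have h3 := h2.trans h
    have : m + 1 ≤ m := by exact_mod_cast h3
    omega
  · intro h
    refine le_trans (iInf_le_of_le m (iInf_le_of_le h le_rfl)) le_rfl

lemma lam1_le_iff {L : ℤ} {ω : ℕ → ℤ} {m : ℕ} :
    lam1 L ω ≤ m ↔ TprimeTime L ω ≤ m ∨ hitTime {0} ω ≤ m := min_le_iff

lemma notHit_iff {ω : ℕ → ℤ} {m : ℕ} :
    ¬ hitTime {0} ω ≤ m ↔ ∀ i ≤ m, ω i ≠ 0 := by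
  rw [hitTime_le_iff]
  push_neg
  simp [Set.mem_singleton_iff]

/-- agreement of two trajectories up to time `n` -/
def Agree (n : ℕ) (ω ω' : ℕ → ℤ) : Prop := ∀ i ≤ n, ω i = ω' i

lemma hitTime_le_iff_agree {A : Set ℤ} {ω ω' : ℕ → ℤ} {n m : ℕ}
    (hag : Agree n ω ω') (hm : m ≤ n) : hitTime A ω ≤ m ↔ hitTime A ω' ≤ m := by
  rw [hitTime_le_iff, hitTime_le_iff]
  constructor
  · rintro ⟨i, hi, h⟩; exact ⟨i, hi, by rw [← hag i (hi.trans hm)]; exact h⟩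
  · rintro ⟨i, hi, h⟩; exact ⟨i, hi, by rw [hag i (hi.trans hm)]; exact h⟩

lemma Tprime_le_iff_agree {L : ℤ} {ω ω' : ℕ → ℤ} {n m : ℕ}
    (hag : Agree n ω ω') (hm : m ≤ n) : TprimeTime L ω ≤ m ↔ TprimeTime L ω' ≤ m := by
  rw [Tprime_le_iff, Tprime_le_iff]
  constructor
  · rintro ⟨⟨i, hi, h⟩, ⟨j, hj, h'⟩⟩
    exact ⟨⟨i, hi, by rw [← hag i (hi.trans hm)]; exact h⟩,
      ⟨j, hj, by rw [← hag j (hj.trans hm)]; exact h'⟩⟩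
  · rintro ⟨⟨i, hi, h⟩, ⟨j, hj, h'⟩⟩
    exact ⟨⟨i, hi, by rw [hag i (hi.trans hm)]; exact h⟩,
      ⟨j, hj, by rw [hag j (hj.trans hm)]; exact h'⟩⟩

lemma lam1_le_iff_agree {L : ℤ} {ω ω' : ℕ → ℤ} {n m : ℕ}
    (hag : Agree n ω ω') (hm : m ≤ n) : lam1 L ω ≤ m ↔ lam1 L ω' ≤ m := by
  rw [lam1_le_iff, lam1_le_iff, Tprime_le_iff_agree hag hm, hitTime_le_iff_agree hag hm]

lemma lam1_eq_agree {L : ℤ} {ω ω' : ℕ → ℤ} {n : ℕ}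
    (hag : Agree n ω ω') (hle : lam1 L ω ≤ n) : lam1 L ω' = lam1 L ω := by
  refine (enat_eq_of_forall fun m => ?_).symm
  rcases le_or_gt m n with hm | hm
  · exact lam1_le_iff_agree hag hm
  · constructor
    · intro _; exact ((lam1_le_iff_agree hag le_rfl).1 hle).trans (by exact_mod_cast hm.le)
    · intro _; exact hle.trans (by exact_mod_cast hm.le)

lemma lamSeq_le_succ {L : ℤ} {k : ℕ} {ω : ℕ → ℤ} : lamSeq L k ω ≤ lamSeq L (k+1) ω := by
  simp only [lamSeq]; exact le_self_add

lemma enat_add_le {m n : ℕ} {s : ℕ∞} (h : (m : ℕ∞) + s ≤ n) : s ≤ ((n - m : ℕ) : ℕ∞) := by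
  cases s using ENat.recTopCoe with
  | top => simp at h
  | coe t =>
    have : m + t ≤ n := by exact_mod_cast h
    exact_mod_cast (by omega : t ≤ n - m)

lemma lamSeq_eq_agree {L : ℤ} {k : ℕ} {ω ω' : ℕ → ℤ} {n : ℕ}
    (hag : Agree n ω ω') (hle : lamSeq L k ω ≤ n) : lamSeq L k ω' = lamSeq L k ω := by
  induction k with
  | zero => rfl
  | succ k ih =>
    have hk : lamSeq L k ω ≤ n := le_trans lamSeq_le_succ hle
    have e1 := ih hk
    have hfin : lamSeq L k ω ≠ ⊤ := fun h => by simp [h] at hk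
    set m := (lamSeq L k ω).toNat with hm
    have hmeq : lamSeq L k ω = (m : ℕ∞) := (ENat.coe_toNat hfin).symm
    have hmn : m ≤ n := by exact_mod_cast hmeq ▸ hk
    have hsh : Agree (n - m) (fun i => ω (m + i)) (fun i => ω' (m + i)) :=
      fun i hi => hag (m + i) (by omega)
    have hlam : lamSeq L (k+1) ω = lamSeq L k ω + lam1 L (fun i => ω (m + i)) := by
      simp only [lamSeq, hm]
    have h2 : lam1 L (fun i => ω (m + i)) ≤ ((n - m : ℕ) : ℕ∞) := by
      refine enat_add_le (m := m) ?_
      rw [← hmeq, ← hlam]; exact hle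
    have e2 := lam1_eq_agree hsh h2
    calc lamSeq L (k+1) ω' = lamSeq L k ω' + lam1 L (fun i => ω' ((lamSeq L k ω').toNat + i)) := by
          simp only [lamSeq]
    _ = lamSeq L k ω + lam1 L (fun i => ω (m + i)) := by rw [e1, hmeq]; simp only [ENat.toNat_coe]; rw [e2]
    _ = lamSeq L (k+1) ω := hlam.symm

lemma lam1_one_le {L : ℤ} {ω : ℕ → ℤ} (h : ω 0 ≠ 0) : 1 ≤ lam1 L ω := by
  rw [ENat.one_le_iff_ne_zero]
  intro h0
  have : lam1 L ω ≤ ((0 : ℕ) : ℕ∞) := by simp [h0]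
  rcases lam1_le_iff.1 this with hT | hH
  · rcases Tprime_le_iff.1 hT with ⟨⟨i, hi, h1⟩, ⟨j, hj, h2⟩⟩
    interval_cases i; interval_cases j; omega
  · rcases hitTime_le_iff.1 hH with ⟨i, hi, h1⟩
    interval_cases i; exact h h1

lemma lam1_mem_I {L : ℤ} (hL : 0 < L) {ω : ℕ → ℤ} {t : ℕ} (hout : L < |ω 0|)
    (hfin : lam1 L ω = (t : ℕ∞)) (hnz : ω t ≠ 0) : |ω t| ≤ L := by
  have h0 : ω 0 ≠ 0 := by intro h; rw [h] at hout; simp at hout; omega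
  have ht1 : 1 ≤ t := by
    by_contra h
    have : t = 0 := by omega
    subst this
    have := lam1_one_le (L := L) h0
    rw [hfin] at this
    exact absurd this (by norm_num)
  have hle : lam1 L ω ≤ (t : ℕ∞) := le_of_eq hfin
  have hnotle : ¬ lam1 L ω ≤ ((t - 1 : ℕ) : ℕ∞) := by
    rw [hfin]; intro h
    have : t ≤ t - 1 := by exact_mod_cast h
    omega
  rcases lam1_le_iff.1 hle with hT | hH
  · rcases Tprime_le_iff.1 hT with ⟨⟨i, hi, h1⟩, _⟩
    by_contra hc
    have hi' : i ≠ t := fun h => by subst h; exact hc h1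
    refine hnotle (lam1_le_iff.2 (Or.inl (Tprime_le_iff.2 ⟨⟨i, by omega, h1⟩, ⟨0, by omega, hout⟩⟩)))
  · rcases hitTime_le_iff.1 hH with ⟨i, hi, h1⟩
    simp only [Set.mem_singleton_iff] at h1
    have hi' : i ≠ t := fun h => by subst h; exact hnz h1
    exact absurd (lam1_le_iff.2 (Or.inr (hitTime_le_iff.2 ⟨i, by omega, h1⟩))) hnotle

/-- The key event: at time `m` the chain completes the relevant λ-stage inside `I`,
nonzero, having avoided `0` so far. -/
def Gset (L : ℤ) (k m : ℕ) : Set (ℕ → ℤ) :=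
  {ω | (∀ i ≤ m, ω i ≠ 0) ∧ |ω m| ≤ L ∧
    (lamSeq L k ω = (m : ℕ∞) ∨
      (lamSeq L (k+1) ω = (m : ℕ∞) ∧ L < |ω ((lamSeq L k ω).toNat)|))}

def S1set (L : ℤ) (k m : ℕ) : Set (ℕ → ℤ) := Gset L k m ∩ {ω | ω (m+1) ≠ 0}

lemma Gset_determ {L : ℤ} {k m : ℕ} {ω ω' : ℕ → ℤ} (hag : Agree m ω ω')
    (h : ω ∈ Gset L k m) : ω' ∈ Gset L k m := by
  obtain ⟨hz, hI, hd⟩ := h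
  refine ⟨fun i hi => by rw [← hag i hi]; exact hz i hi, by rw [← hag m le_rfl]; exact hI, ?_⟩
  rcases hd with h1 | ⟨h2, h3⟩
  · exact Or.inl (by rw [lamSeq_eq_agree hag (le_of_eq h1), h1])
  · have hk : lamSeq L k ω ≤ (m : ℕ∞) := le_trans lamSeq_le_succ (le_of_eq h2)
    have e1 : lamSeq L k ω' = lamSeq L k ω := lamSeq_eq_agree hag hk
    have e2 : lamSeq L (k+1) ω' = lamSeq L (k+1) ω := lamSeq_eq_agree hag (le_of_eq h2)
    have hfin : lamSeq L k ω ≠ ⊤ := fun ht => by simp [ht] at hk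
    have htn : (lamSeq L k ω).toNat ≤ m := by
      have hc := ENat.coe_toNat hfin
      rw [← hc] at hk
      exact_mod_cast hk
    refine Or.inr ⟨by rw [e2, h2], ?_⟩
    rw [e1, ← hag _ htn]
    exact h3

lemma S1set_determ {L : ℤ} {k m : ℕ} {ω ω' : ℕ → ℤ} (hag : Agree (m+1) ω ω')
    (h : ω ∈ S1set L k m) : ω' ∈ S1set L k m := by
  obtain ⟨hG, hnz⟩ := h
  exact ⟨Gset_determ (fun i hi => hag i (by omega)) hG,
    by simp only [Set.mem_setOf_eq]; rw [← hag (m+1) le_rfl]; exact hnz⟩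

lemma Gset_disjoint {L : ℤ} {k : ℕ} {m m' : ℕ} (h : m ≠ m') :
    Disjoint (Gset L k m) (Gset L k m') := by
  rw [Set.disjoint_left]
  rintro ω ⟨hz, hI, hd⟩ ⟨hz', hI', hd'⟩
  rcases hd with h1 | ⟨h2, h3⟩ <;> rcases hd' with h1' | ⟨h2', h3'⟩
  · exact h (by exact_mod_cast h1 ▸ h1')
  · rw [h1] at h3'; simp only [ENat.toNat_coe] at h3'; omega
  · rw [h1'] at h3; simp only [ENat.toNat_coe] at h3; omega
  · exact h (by exact_mod_cast h2 ▸ h2')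

lemma Gset_subset_E {L : ℤ} {k m : ℕ} :
    Gset L k m ⊆ {ω | lamSeq L k ω < hitTime {0} ω} := by
  rintro ω ⟨hz, _, hd⟩
  have hk : lamSeq L k ω ≤ (m : ℕ∞) := by
    rcases hd with h1 | ⟨h2, _⟩
    · exact le_of_eq h1
    · exact le_trans lamSeq_le_succ (le_of_eq h2)
  have hH : ¬ hitTime {0} ω ≤ (m : ℕ∞) := notHit_iff.2 hz
  exact lt_of_le_of_lt hk (lt_of_not_ge hH)

lemma E_subset_union {L : ℤ} (hL : 0 < L) {k : ℕ} :
    {ω | lamSeq L (k+2) ω < hitTime {0} ω} ⊆ ⋃ m, S1set L k m := by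
  intro ω hω
  simp only [Set.mem_setOf_eq] at hω
  have hHgt : lamSeq L (k+2) ω < hitTime {0} ω := hω
  have hfin2 : lamSeq L (k+2) ω ≠ ⊤ := fun h => by rw [h] at hHgt; exact absurd hHgt (by simp)
  have h12 : lamSeq L (k+1) ω ≤ lamSeq L (k+2) ω := lamSeq_le_succ
  have h01 : lamSeq L k ω ≤ lamSeq L (k+1) ω := lamSeq_le_succ
  have hfin1 : lamSeq L (k+1) ω ≠ ⊤ := fun h => hfin2 (top_le_iff.1 (h ▸ h12))
  have hfin0 : lamSeq L k ω ≠ ⊤ := fun h => hfin1 (top_le_iff.1 (h ▸ h01))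
  set n := (lamSeq L k ω).toNat with hn
  set p := (lamSeq L (k+1) ω).toNat with hp
  have hneq : lamSeq L k ω = (n : ℕ∞) := (ENat.coe_toNat hfin0).symm
  have hpeq : lamSeq L (k+1) ω = (p : ℕ∞) := (ENat.coe_toNat hfin1).symm
  have hnp : n ≤ p := by
    have := h01; rw [hneq, hpeq] at this; exact_mod_cast this
  have key : ∀ m : ℕ, (m : ℕ∞) ≤ lamSeq L (k+2) ω → ∀ i ≤ m, ω i ≠ 0 := by
    intro m hm
    exact notHit_iff.1 (fun h => (not_le.2 hHgt) (h.trans hm))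
  have hlam1 : lamSeq L (k+1) ω = lamSeq L k ω + lam1 L (fun i => ω (n + i)) := by
    conv_lhs => rw [lamSeq]
  have hlam2 : lamSeq L (k+2) ω = lamSeq L (k+1) ω + lam1 L (fun i => ω (p + i)) := by
    conv_lhs => rw [lamSeq]
  have hzn : ∀ i ≤ n, ω i ≠ 0 := key n (by rw [← hneq]; exact h01.trans h12)
  have h1le : 1 ≤ lam1 L (fun i => ω (n + i)) := lam1_one_le (by simpa using hzn n le_rfl)
  have hzp : ∀ i ≤ p, ω i ≠ 0 := key p (by rw [← hpeq]; exact h12)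
  have h2le : 1 ≤ lam1 L (fun i => ω (p + i)) := lam1_one_le (by simpa using hzp p le_rfl)
  have hp2 : (p : ℕ∞) + 1 ≤ lamSeq L (k+2) ω := by
    rw [hlam2]; exact add_le_add (le_of_eq hpeq.symm) h2le
  have hz1 : ∀ i ≤ p + 1, ω i ≠ 0 := key (p+1) (by push_cast; exact hp2)
  by_cases hA : |ω n| ≤ L
  · refine Set.mem_iUnion.2 ⟨n, ⟨⟨fun i hi => hz1 i (by omega), hA, Or.inl hneq⟩,
      hz1 (n+1) (by omega)⟩⟩
  · push_neg at hA
    have hs1fin : lam1 L (fun i => ω (n + i)) ≠ ⊤ := by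
      intro ht
      rw [hlam1, ht, add_top] at hfin1
      exact hfin1 rfl
    set t := (lam1 L (fun i => ω (n + i))).toNat with hts
    have hteq : lam1 L (fun i => ω (n + i)) = (t : ℕ∞) := (ENat.coe_toNat hs1fin).symm
    have hpnt : p = n + t := by
      have : (p : ℕ∞) = (n : ℕ∞) + (t : ℕ∞) := by
        rw [← hpeq, hlam1, hneq, hteq]
      exact_mod_cast this
    have hI : |ω p| ≤ L := by
      have hnz : (fun i => ω (n + i)) t ≠ 0 := by
        simp only []
        rw [← hpnt]
        exact hzp p le_rfl
      have := lam1_mem_I hL (ω := fun i => ω (n + i)) (hout := by simpa using hA) hteq hnz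
      simpa [← hpnt] using this
    refine Set.mem_iUnion.2 ⟨p, ⟨⟨fun i hi => hz1 i (by omega), hI,
      Or.inr ⟨hpeq, by rw [← hn]; exact hA⟩⟩, hz1 (p+1) le_rfl⟩⟩

/-- extension of a finite path to a full trajectory -/
def pExt (m : ℕ) (a : Fin (m+1) → ℤ) : ℕ → ℤ := fun n => if h : n < m + 1 then a ⟨n, h⟩ else 0

def Cyl (m : ℕ) (a : Fin (m+1) → ℤ) : Set (ℕ → ℤ) := {ω | ∀ i ≤ m, ω i = pExt m a i}

/-- the weight of a finite path -/
noncomputable def wgt (πz : ℤ → ℤ → ℝ) (a : ℕ → ℤ) (m : ℕ) : ℝ≥0∞ :=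
  ENNReal.ofReal (∏ i ∈ Finset.range m, πz (a i) (a (i + 1) - a i))

def Determ (m : ℕ) (S : Set (ℕ → ℤ)) : Prop :=
  ∀ ω ω', Agree m ω ω' → ω ∈ S → ω' ∈ S

lemma measurable_cyl (m : ℕ) (a : Fin (m+1) → ℤ) : MeasurableSet (Cyl m a) := by
  have : Cyl m a = ⋂ (i : ℕ) (_ : i ≤ m), (fun ω : ℕ → ℤ => ω i) ⁻¹' {pExt m a i} := by
    ext ω; simp [Cyl]
  rw [this]
  exact MeasurableSet.iInter fun i => MeasurableSet.iInter fun _ =>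
    (measurable_pi_apply i) (measurableSet_singleton _)

lemma mem_own_cyl (m : ℕ) (ω : ℕ → ℤ) : ω ∈ Cyl m (fun i => ω i) := by
  intro i hi
  simp [pExt, Nat.lt_succ_iff.2 hi]

lemma union_cyl (m : ℕ) (S : Set (ℕ → ℤ)) : S = ⋃ a : Fin (m+1) → ℤ, (Cyl m a ∩ S) := by
  ext ω
  constructor
  · intro h; exact Set.mem_iUnion.2 ⟨fun i => ω i, mem_own_cyl m ω, h⟩
  · intro h; rcases Set.mem_iUnion.1 h with ⟨a, _, h2⟩; exact h2

lemma inter_cyl {m : ℕ} {S : Set (ℕ → ℤ)} (hS : Determ m S) (a : Fin (m+1) → ℤ) :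
    Cyl m a ∩ S = if pExt m a ∈ S then Cyl m a else ∅ := by
  ext ω
  split_ifs with h
  · constructor
    · rintro ⟨h1, _⟩; exact h1
    · intro h1
      exact ⟨h1, hS (pExt m a) ω (fun i hi => (h1 i hi).symm) h⟩
  · constructor
    · rintro ⟨h1, h2⟩
      exact absurd (hS ω (pExt m a) (fun i hi => h1 i hi) h2) h
    · intro h1; exact absurd h1 (Set.notMem_empty ω)

lemma cyl_disjoint {m : ℕ} {a b : Fin (m+1) → ℤ} (h : a ≠ b) :
    Disjoint (Cyl m a) (Cyl m b) := by
  rw [Set.disjoint_left]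
  intro ω h1 h2
  refine h (funext fun i => ?_)
  have e1 := h1 i.1 (Nat.lt_succ_iff.1 i.2)
  have e2 := h2 i.1 (Nat.lt_succ_iff.1 i.2)
  have : pExt m a i.1 = pExt m b i.1 := by rw [← e1, e2]
  simpa [pExt, i.2, Fin.eta] using this

lemma measurable_determ {m : ℕ} {S : Set (ℕ → ℤ)} (hS : Determ m S) :
    MeasurableSet S := by
  rw [union_cyl m S]
  refine MeasurableSet.iUnion fun a => ?_
  rw [inter_cyl hS]
  split_ifs
  · exact measurable_cyl m a
  · exact MeasurableSet.empty

section Meas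

variable {πz : ℤ → ℤ → ℝ} {P : ℤ → Measure (ℕ → ℤ)}

lemma meas_cyl (hcyl : ∀ (x : ℤ) (n : ℕ) (a : ℕ → ℤ),
      P x {ω | ∀ i ≤ n, ω i = a i} =
        if a 0 = x then
          ENNReal.ofReal (∏ i ∈ Finset.range n, πz (a i) (a (i + 1) - a i))
        else 0) (x : ℤ) (m : ℕ) (a : Fin (m+1) → ℤ) :
    P x (Cyl m a) = if pExt m a 0 = x then wgt πz (pExt m a) m else 0 :=
  hcyl x m (pExt m a)

lemma meas_determ (hcyl : ∀ (x : ℤ) (n : ℕ) (a : ℕ → ℤ),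
      P x {ω | ∀ i ≤ n, ω i = a i} =
        if a 0 = x then
          ENNReal.ofReal (∏ i ∈ Finset.range n, πz (a i) (a (i + 1) - a i))
        else 0) (x : ℤ) {m : ℕ} {S : Set (ℕ → ℤ)} (hS : Determ m S) :
    P x S = ∑' a : Fin (m+1) → ℤ,
      if pExt m a ∈ S ∧ pExt m a 0 = x then wgt πz (pExt m a) m else 0 := by
  conv_lhs => rw [union_cyl m S]
  rw [measure_iUnion ?_ ?_]
  · refine tsum_congr fun a => ?_
    rw [inter_cyl hS]
    by_cases h1 : pExt m a ∈ S
    · rw [if_pos h1, meas_cyl hcyl]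
      by_cases h2 : pExt m a 0 = x
      · rw [if_pos h2, if_pos ⟨h1, h2⟩]
      · rw [if_neg h2, if_neg (fun h => h2 h.2)]
    · rw [if_neg h1, if_neg (fun h => h1 h.1)]
      exact measure_empty
  · intro a b hab
    simp only [Function.onFun]
    exact Disjoint.mono inf_le_left inf_le_left (cyl_disjoint hab)
  · intro a
    rw [inter_cyl hS]
    split_ifs
    · exact measurable_cyl m a
    · exact MeasurableSet.empty

end Meas

/-- snoc equivalence -/
def snocE (m : ℕ) : ((Fin (m+1) → ℤ) × ℤ) ≃ (Fin (m+2) → ℤ) where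
  toFun p := Fin.snoc p.1 p.2
  invFun a := (Fin.init a, a (Fin.last (m+1)))
  left_inv p := by simp [Fin.init_snoc, Fin.snoc_last]
  right_inv a := by simp [Fin.snoc_init_self]

lemma pExt_snoc_le {m : ℕ} (b : Fin (m+1) → ℤ) (c : ℤ) {i : ℕ} (hi : i ≤ m) :
    pExt (m+1) (Fin.snoc b c) i = pExt m b i := by
  have h1 : i < m + 2 := by omega
  have h2 : i < m + 1 := by omega
  simp only [pExt, dif_pos h1, dif_pos h2]
  have : (⟨i, h1⟩ : Fin (m+2)) = Fin.castSucc ⟨i, h2⟩ := rfl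
  rw [this, Fin.snoc_castSucc]

lemma pExt_snoc_last {m : ℕ} (b : Fin (m+1) → ℤ) (c : ℤ) :
    pExt (m+1) (Fin.snoc b c) (m+1) = c := by
  have h1 : m + 1 < m + 2 := by omega
  simp only [pExt, dif_pos h1]
  have : (⟨m+1, h1⟩ : Fin (m+2)) = Fin.last (m+1) := rfl
  rw [this, Fin.snoc_last]

lemma agree_snoc {m : ℕ} (b : Fin (m+1) → ℤ) (c : ℤ) :
    Agree m (pExt (m+1) (Fin.snoc b c)) (pExt m b) :=
  fun i hi => pExt_snoc_le b c hi

lemma wgt_snoc {πz : ℤ → ℤ → ℝ} (hπznn : ∀ z y, 0 ≤ πz z y) {m : ℕ}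
    (b : Fin (m+1) → ℤ) (c : ℤ) :
    wgt πz (pExt (m+1) (Fin.snoc b c)) (m+1) =
      wgt πz (pExt m b) m * ENNReal.ofReal (πz (pExt m b m) (c - pExt m b m)) := by
  unfold wgt
  rw [Finset.prod_range_succ, ENNReal.ofReal_mul (Finset.prod_nonneg fun i _ => hπznn _ _)]
  congr 1
  · congr 1
    refine Finset.prod_congr rfl fun i hi => ?_
    have hi' : i < m := Finset.mem_range.1 hi
    rw [pExt_snoc_le b c (by omega : i ≤ m), pExt_snoc_le b c (by omega : i + 1 ≤ m)]
  · rw [pExt_snoc_le b c le_rfl, pExt_snoc_last b c]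

lemma mem_S1_snoc {L : ℤ} {k m : ℕ} (b : Fin (m+1) → ℤ) (c : ℤ) :
    pExt (m+1) (Fin.snoc b c) ∈ S1set L k m ↔ (pExt m b ∈ Gset L k m ∧ c ≠ 0) := by
  constructor
  · rintro ⟨hG, hnz⟩
    refine ⟨Gset_determ (agree_snoc b c) hG, ?_⟩
    simp only [Set.mem_setOf_eq] at hnz
    rwa [pExt_snoc_last b c] at hnz
  · rintro ⟨hG, hc⟩
    refine ⟨Gset_determ (fun i hi => (pExt_snoc_le b c hi).symm) hG, ?_⟩
    simp only [Set.mem_setOf_eq]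
    rwa [pExt_snoc_last b c]

/-- the one-step contraction at a fixed stage `m` -/
lemma step4 {πz : ℤ → ℤ → ℝ} (hπznn : ∀ z y, 0 ≤ πz z y)
    (hsum : ∀ z, HasSum (πz z) 1)
    {P : ℤ → Measure (ℕ → ℤ)}
    (hcyl : ∀ (x : ℤ) (n : ℕ) (a : ℕ → ℤ),
      P x {ω | ∀ i ≤ n, ω i = a i} =
        if a 0 = x then
          ENNReal.ofReal (∏ i ∈ Finset.range n, πz (a i) (a (i + 1) - a i))
        else 0)
    {L : ℤ} {δ : ℝ} (hδ : ∀ z : ℤ, |z| ≤ L → z ≠ 0 → δ ≤ πz z (-z))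
    (x : ℤ) (k m : ℕ) :
    P x (S1set L k m) ≤ ENNReal.ofReal (1 - δ) * P x (Gset L k m) := by
  rw [meas_determ hcyl x (fun ω ω' hag h => S1set_determ hag h),
      meas_determ hcyl x (fun ω ω' hag h => Gset_determ hag h)]
  rw [← Equiv.tsum_eq (snocE m), ← ENNReal.tsum_mul_left]
  rw [ENNReal.tsum_prod']
  refine ENNReal.tsum_le_tsum fun b => ?_
  by_cases hb : pExt m b ∈ Gset L k m ∧ pExt m b 0 = x
  · -- extract z ∈ I \ {0}
    set z := pExt m b m with hz
    have hznz : z ≠ 0 := hb.1.1 m le_rfl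
    have hzI : |z| ≤ L := hb.1.2.1
    have hδz := hδ z hzI hznz
    -- the inner sum
    have hterm : ∀ c : ℤ,
        (if pExt (m+1) ((snocE m) (b, c)) ∈ S1set L k m ∧ pExt (m+1) ((snocE m) (b, c)) 0 = x
          then wgt πz (pExt (m+1) ((snocE m) (b, c))) (m+1) else 0) =
        wgt πz (pExt m b) m * (if c ≠ 0 then ENNReal.ofReal (πz z (c - z)) else 0) := by
      intro c
      have h0 : pExt (m+1) ((snocE m) (b, c)) 0 = pExt m b 0 := pExt_snoc_le b c (Nat.zero_le m)
      by_cases hc : c ≠ 0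
      · rw [if_pos ⟨(mem_S1_snoc b c).2 ⟨hb.1, hc⟩, h0.trans hb.2⟩, if_pos hc]
        exact wgt_snoc hπznn b c
      · rw [if_neg (fun h => hc ((mem_S1_snoc b c).1 h.1).2), if_neg hc, mul_zero]
    calc (∑' c : ℤ, if pExt (m+1) ((snocE m) (b, c)) ∈ S1set L k m ∧
            pExt (m+1) ((snocE m) (b, c)) 0 = x
          then wgt πz (pExt (m+1) ((snocE m) (b, c))) (m+1) else 0)
        = wgt πz (pExt m b) m * ∑' c : ℤ, (if c ≠ 0 then ENNReal.ofReal (πz z (c - z)) else 0) := by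
          rw [← ENNReal.tsum_mul_left]; exact tsum_congr hterm
      _ = wgt πz (pExt m b) m * ENNReal.ofReal (1 - πz z (-z)) := by
          congr 1
          have hg : HasSum (fun c : ℤ => πz z (c - z)) 1 := by
            have := (Equiv.hasSum_iff (Equiv.subRight z)).2 (hsum z)
            exact this
          have hup : HasSum (Function.update (fun c : ℤ => πz z (c - z)) 0 0)
              (1 - πz z (-z)) := by
            have := hg.update 0 0
            have h2 : (0 : ℝ) - πz z ((0:ℤ) - z) + 1 = 1 - πz z (-z) := by
              rw [zero_sub]; ring
            rwa [h2] at this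
          have heq : ∀ c : ℤ, (if c ≠ 0 then ENNReal.ofReal (πz z (c - z)) else 0) =
              ENNReal.ofReal (Function.update (fun c : ℤ => πz z (c - z)) 0 0 c) := by
            intro c
            by_cases hc : c = 0
            · subst hc; simp
            · rw [if_pos hc, Function.update_of_ne hc]
          rw [tsum_congr heq, ← ENNReal.ofReal_tsum_of_nonneg ?_ hup.summable, hup.tsum_eq]
          intro c
          by_cases hc : c = 0
          · subst hc; simp
          · rw [Function.update_of_ne hc]; exact hπznn _ _
      _ ≤ wgt πz (pExt m b) m * ENNReal.ofReal (1 - δ) := by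
          exact mul_le_mul_right (ENNReal.ofReal_le_ofReal (by linarith)) _
      _ = ENNReal.ofReal (1 - δ) *
            (if pExt m b ∈ Gset L k m ∧ pExt m b 0 = x then wgt πz (pExt m b) m else 0) := by
          rw [if_pos hb, mul_comm]
  · rw [if_neg hb, mul_zero]
    refine le_of_eq (ENNReal.tsum_eq_zero.2 fun c => ?_)
    rw [if_neg]
    rintro ⟨h1, h2⟩
    have h0 : pExt (m+1) ((snocE m) (b, c)) 0 = pExt m b 0 := pExt_snoc_le b c (Nat.zero_le m)
    exact hb ⟨((mem_S1_snoc b c).1 h1).1, h0.symm.trans h2⟩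

lemma contraction {πz : ℤ → ℤ → ℝ} (hπznn : ∀ z y, 0 ≤ πz z y)
    (hsum : ∀ z, HasSum (πz z) 1)
    {P : ℤ → Measure (ℕ → ℤ)}
    (hcyl : ∀ (x : ℤ) (n : ℕ) (a : ℕ → ℤ),
      P x {ω | ∀ i ≤ n, ω i = a i} =
        if a 0 = x then
          ENNReal.ofReal (∏ i ∈ Finset.range n, πz (a i) (a (i + 1) - a i))
        else 0)
    {L : ℤ} (hL : 0 < L) {δ : ℝ} (hδ : ∀ z : ℤ, |z| ≤ L → z ≠ 0 → δ ≤ πz z (-z))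
    (x : ℤ) (k : ℕ) :
    P x {ω | lamSeq L (k+2) ω < hitTime {0} ω} ≤
      ENNReal.ofReal (1 - δ) * P x {ω | lamSeq L k ω < hitTime {0} ω} := by
  calc P x {ω | lamSeq L (k+2) ω < hitTime {0} ω}
      ≤ P x (⋃ m, S1set L k m) := measure_mono (E_subset_union hL)
    _ ≤ ∑' m : ℕ, P x (S1set L k m) := measure_iUnion_le _
    _ ≤ ∑' m : ℕ, ENNReal.ofReal (1 - δ) * P x (Gset L k m) :=
        ENNReal.tsum_le_tsum fun m => step4 hπznn hsum hcyl hδ x k m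
    _ = ENNReal.ofReal (1 - δ) * ∑' m : ℕ, P x (Gset L k m) := ENNReal.tsum_mul_left
    _ = ENNReal.ofReal (1 - δ) * P x (⋃ m, Gset L k m) := by
        rw [measure_iUnion (fun m m' h => Gset_disjoint h)
          (fun m => measurable_determ (fun ω ω' hag h => Gset_determ hag h))]
    _ ≤ ENNReal.ofReal (1 - δ) * P x {ω | lamSeq L k ω < hitTime {0} ω} :=
        mul_le_mul_right (measure_mono (Set.iUnion_subset fun m => Gset_subset_E)) _


end S12

/-- With `δ = min{π_x(−x) : x ∈ I, x ≠ 0} > 0`, for every `x ∈ ℤ` and every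
integer `k ≥ 0`, `ℙ_x(λ_k < H_0) ≤ (1 − δ)^⌊k/2⌋`, for the Markov chain on `ℤ`
with transitions `P(z, w) = π_z(w − z)`. -/
theorem stmt12
    (π : ℤ → ℝ) (πz : ℤ → ℤ → ℝ)
    (hπ : IsPMF π) (hπz : ∀ z, IsPMF (πz z))
    (hsymm : ∀ x, π (-x) = π x)
    (hsupp : (∀ x, 0 < π x) ∧ ∀ z, z ≠ 0 → ∀ x, 0 < πz z x)
    (htail : ∃ f F : ℝ, 0 < f ∧ 0 < F ∧
      (∀ x, π x ≤ F * Real.exp (-f * |(x : ℝ)|)) ∧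
      (∀ z x, πz z x ≤ F * Real.exp (-f * |(x : ℝ)|)))
    (htv : ∃ g G : ℝ, 0 < g ∧ 0 < G ∧
      ∀ z, (1 / 2) * ∑' x, |πz z x - π x| ≤ G * Real.exp (-g * |(z : ℝ)|))
    (L : ℤ) (hL : 0 < L)
    (P : ℤ → Measure (ℕ → ℤ))
    (hP : ∀ x, IsProbabilityMeasure (P x))
    (hcyl : ∀ (x : ℤ) (n : ℕ) (a : ℕ → ℤ),
      P x {ω | ∀ i ≤ n, ω i = a i} =
        if a 0 = x then
          ENNReal.ofReal (∏ i ∈ Finset.range n, πz (a i) (a (i + 1) - a i))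
        else 0) :
    ∀ (x : ℤ) (k : ℕ),
      P x {ω | lamSeq L k ω < hitTime {0} ω} ≤
        ENNReal.ofReal
          ((1 - sInf {r : ℝ | ∃ z : ℤ, |z| ≤ L ∧ z ≠ 0 ∧ r = πz z (-z)}) ^ (k / 2)) := by
  intro x k
  set δ := sInf {r : ℝ | ∃ z : ℤ, |z| ≤ L ∧ z ≠ 0 ∧ r = πz z (-z)} with hδdef
  have hπznn : ∀ z y, 0 ≤ πz z y := fun z y => (hπz z).1 y
  have hsum : ∀ z, HasSum (πz z) 1 := fun z => (hπz z).2
  have hbdd : BddBelow {r : ℝ | ∃ z : ℤ, |z| ≤ L ∧ z ≠ 0 ∧ r = πz z (-z)} := by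
    refine ⟨0, fun r hr => ?_⟩
    obtain ⟨z, _, _, rfl⟩ := hr
    exact hπznn z (-z)
  have hδ : ∀ z : ℤ, |z| ≤ L → z ≠ 0 → δ ≤ πz z (-z) := by
    intro z h1 h2
    exact csInf_le hbdd ⟨z, h1, h2, rfl⟩
  have hδ1 : δ ≤ 1 := by
    have h1 : δ ≤ πz 1 (-1) := hδ 1 (by simp; omega) one_ne_zero
    have h2 : πz 1 (-1) ≤ 1 := le_hasSum (hsum 1) (-1) (fun j _ => hπznn 1 j)
    linarith
  have h1δ : 0 ≤ 1 - δ := by linarith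
  have hbase : ∀ j : ℕ, P x {ω | lamSeq L j ω < hitTime {0} ω} ≤ 1 := by
    intro j
    have := hP x
    exact prob_le_one
  induction k using Nat.strong_induction_on with
  | _ k ih =>
    match k, ih with
    | 0, _ => simpa using hbase 0
    | 1, _ => simpa using hbase 1
    | (k+2), ih =>
      have hstep := S12.contraction hπznn hsum hcyl hL hδ x k
      have hk := ih k (by omega)
      have hdiv : (k + 2) / 2 = k / 2 + 1 := by omega
      calc P x {ω | lamSeq L (k+2) ω < hitTime {0} ω}
          ≤ ENNReal.ofReal (1 - δ) * P x {ω | lamSeq L k ω < hitTime {0} ω} := hstep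
        _ ≤ ENNReal.ofReal (1 - δ) * ENNReal.ofReal ((1 - δ) ^ (k / 2)) :=
            mul_le_mul_right hk _
        _ = ENNReal.ofReal ((1 - δ) ^ ((k + 2) / 2)) := by
            rw [← ENNReal.ofReal_mul h1δ, hdiv, pow_succ, mul_comm]
end

section
/- The quantity sup_{x ∈ I} 𝔼_x(|X_{λ_1}| · 1{λ_1 < ∞}) is finite. -/
open MeasureTheory
open scoped Classical ENNReal

lemma iInf_nat_le {Q : ℕ → Prop} {k : ℕ} (h : Q k) :
    (⨅ (n : ℕ) (_ : Q n), (n : ℕ∞)) ≤ k := iInf₂_le k h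

lemma iInf_nat_eq {Q : ℕ → Prop} {m : ℕ}
    (h : (⨅ (n : ℕ) (_ : Q n), (n : ℕ∞)) = m) : Q m ∧ ∀ k < m, ¬ Q k := by
  have hlt : ∀ k < m, ¬ Q k := by
    intro k hk hQ
    have h1 : (⨅ (n : ℕ) (_ : Q n), (n : ℕ∞)) ≤ k := iInf_nat_le hQ
    rw [h] at h1
    exact absurd (Nat.cast_le.mp h1) (Nat.not_le.mpr hk)
  refine ⟨?_, hlt⟩
  by_contra hQm
  have h2 : ((m+1 : ℕ) : ℕ∞) ≤ ⨅ (n : ℕ) (_ : Q n), (n : ℕ∞) := by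
    refine le_iInf₂ fun n hn => ?_
    have hmn : m < n := by
      by_contra hc
      push_neg at hc
      rcases Nat.lt_or_ge n m with h'' | h''
      · exact hlt n h'' hn
      · exact hQm (by rwa [le_antisymm hc h''] at hn)
    exact_mod_cast hmn
  rw [h] at h2
  have := Nat.cast_le.mp h2
  omega

noncomputable def gfun (L : ℤ) (n : ℕ) (ω : ℕ → ℤ) : ℝ≥0∞ :=
  if (∀ i < n, |ω i| ≤ L ∧ ω i ≠ 0) ∧ L < |ω n| then ENNReal.ofReal |((ω n : ℤ) : ℝ)|
  else 0

lemma pointwise_bound (L : ℤ) (hL : 0 < L) (ω : ℕ → ℤ) :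
    (if lam1 L ω ≠ ⊤ then ENNReal.ofReal |((ω (lam1 L ω).toNat : ℤ) : ℝ)| else 0)
    ≤ ENNReal.ofReal (L : ℝ) + ∑' n : ℕ, gfun L (n + 1) ω := by
  by_cases htop : lam1 L ω = ⊤
  · simp [htop]
  · rw [if_pos htop]
    obtain ⟨m, hm⟩ := WithTop.ne_top_iff_exists.mp htop
    have htn : (lam1 L ω).toNat = m := by rw [← hm]; rfl
    rw [htn]
    by_cases hsmall : |ω m| ≤ L
    · refine le_trans ?_ le_self_add
      apply ENNReal.ofReal_le_ofReal
      calc |((ω m : ℤ):ℝ)| = ((|ω m| : ℤ) : ℝ) := by push_cast; rfl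
        _ ≤ (L : ℝ) := by exact_mod_cast hsmall
    · push_neg at hsmall
      have hmin : TprimeTime L ω ⊓ hitTime ({0} : Set ℤ) ω = (m : ℕ∞) := by
        exact hm.symm
      have hT : (m : ℕ∞) ≤ TprimeTime L ω := by rw [← hmin]; exact min_le_left _ _
      have hH : (m : ℕ∞) ≤ hitTime ({0} : Set ℤ) ω := by
        rw [← hmin]; exact min_le_right _ _
      -- no zeros before m
      have hnz : ∀ i < m, ω i ≠ 0 := by
        intro i hi h0
        have : hitTime ({0} : Set ℤ) ω ≤ i := iInf_nat_le (by simp [h0])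
        have := le_trans hH this
        have := Nat.cast_le.mp this
        omega
      -- hitTime ≠ m, so TprimeTime = m
      have hTm : TprimeTime L ω = (m : ℕ∞) := by
        rcases min_eq_iff.mp hmin with ⟨h1, _⟩ | ⟨h1, _⟩
        · exact h1
        · exfalso
          obtain ⟨hQ, _⟩ := iInf_nat_eq (Q := fun n => ω n ∈ ({0} : Set ℤ)) h1
          simp only [Set.mem_singleton_iff] at hQ
          rw [hQ] at hsmall
          simp at hsmall
          omega
      obtain ⟨hQm, hQlt⟩ := iInf_nat_eq
        (Q := fun n => (∃ i ≤ n, |ω i| ≤ L) ∧ ∃ i ≤ n, L < |ω i|) hTm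
      -- m ≥ 1
      have hm1 : 0 < m := by
        rcases Nat.eq_zero_or_pos m with h0 | h0
        · exfalso
          subst h0
          obtain ⟨⟨i, hi, hiL⟩, _⟩ := hQm
          interval_cases i
          omega
        · exact h0
      -- all before m are in I
      have hin : ∀ i < m, |ω i| ≤ L := by
        obtain ⟨⟨j, hj, hjL⟩, _⟩ := hQm
        have hjm : j < m := by
          rcases Nat.lt_or_ge j m with h' | h'
          · exact h'
          · exfalso; rw [le_antisymm hj h'] at hjL; omega
        intro i hi
        by_contra hc
        push_neg at hc
        exact hQlt (max i j) (by omega)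
          ⟨⟨j, le_max_right _ _, hjL⟩, ⟨i, le_max_left _ _, hc⟩⟩
      -- conclude via gfun at m
      have hg : gfun L ((m-1)+1) ω = ENNReal.ofReal |((ω m : ℤ) : ℝ)| := by
        have hmm : m - 1 + 1 = m := Nat.succ_pred_eq_of_pos hm1
        rw [hmm]
        exact if_pos ⟨fun i hi => ⟨hin i hi, hnz i hi⟩, hsmall⟩
      calc ENNReal.ofReal |((ω m : ℤ) : ℝ)| = gfun L ((m-1)+1) ω := hg.symm
        _ ≤ ∑' n : ℕ, gfun L (n + 1) ω := ENNReal.le_tsum (m - 1)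
        _ ≤ _ := le_add_self


noncomputable def peF (πz : ℤ → ℤ → ℝ) (z w : ℤ) : ℝ≥0∞ := ENNReal.ofReal (πz z w)

noncomputable def W (πz : ℤ → ℤ → ℝ) (n : ℕ) (a : Fin (n+1) → ℤ) : ℝ≥0∞ :=
  ∏ i : Fin n, peF πz (a i.castSucc) (a i.succ - a i.castSucc)

def cylSet (m : ℕ) (a : Fin (m+1) → ℤ) : Set (ℕ → ℤ) :=
  {ω | ∀ i : Fin (m+1), ω i = a i}

lemma cylSet_meas (m : ℕ) (a : Fin (m+1) → ℤ) : MeasurableSet (cylSet m a) := by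
  have : cylSet m a = ⋂ i : Fin (m+1), (fun ω : ℕ → ℤ => ω i) ⁻¹' {a i} := by
    ext ω; simp [cylSet]
  rw [this]
  exact MeasurableSet.iInter fun i => (measurable_pi_apply (i : ℕ)) trivial

lemma lint_cyl (m : ℕ) (c : (Fin (m+1) → ℤ) → ℝ≥0∞) (μ : Measure (ℕ → ℤ)) :
    ∫⁻ ω, c (fun i => ω i) ∂μ = ∑' a : Fin (m+1) → ℤ, c a * μ (cylSet m a) := by
  have hpt : ∀ ω : ℕ → ℤ, c (fun i => ω i) =
      ∑' a : Fin (m+1) → ℤ, Set.indicator (cylSet m a) (fun _ => c a) ω := by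
    intro ω
    rw [tsum_eq_single (fun i : Fin (m+1) => ω i) ?_]
    · rw [Set.indicator_of_mem]
      intro i; rfl
    · intro a ha
      rw [Set.indicator_of_notMem]
      intro hmem
      exact ha (funext fun i => (hmem i).symm)
  calc ∫⁻ ω, c (fun i => ω i) ∂μ
      = ∫⁻ ω, ∑' a : Fin (m+1) → ℤ, Set.indicator (cylSet m a) (fun _ => c a) ω ∂μ := by
        exact lintegral_congr hpt
    _ = ∑' a : Fin (m+1) → ℤ, ∫⁻ ω, Set.indicator (cylSet m a) (fun _ => c a) ω ∂μ := by
        exact lintegral_tsum fun a =>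
          ((measurable_const.indicator (cylSet_meas m a)).aemeasurable)
    _ = ∑' a : Fin (m+1) → ℤ, c a * μ (cylSet m a) := by
        congr 1; ext a
        rw [lintegral_indicator (cylSet_meas m a), setLIntegral_const]

def extZ (m : ℕ) (a : Fin (m+1) → ℤ) : ℕ → ℤ :=
  fun i => if h : i < m + 1 then a ⟨i, h⟩ else 0

lemma P_cyl (πz : ℤ → ℤ → ℝ) (hnn : ∀ z w, 0 ≤ πz z w)
    (P : ℤ → Measure (ℕ → ℤ))
    (hcyl : ∀ (x : ℤ) (n : ℕ) (a : ℕ → ℤ),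
      P x {ω | ∀ i ≤ n, ω i = a i} =
        if a 0 = x then
          ENNReal.ofReal (∏ i ∈ Finset.range n, πz (a i) (a (i + 1) - a i))
        else 0)
    (x : ℤ) (m : ℕ) (a : Fin (m+1) → ℤ) :
    P x (cylSet m a) = if a 0 = x then W πz m a else 0 := by
  have hset : cylSet m a = {ω | ∀ i ≤ m, ω i = extZ m a i} := by
    ext ω
    constructor
    · intro h i hi
      simp only [extZ, dif_pos (Nat.lt_succ_of_le hi)]
      exact h ⟨i, Nat.lt_succ_of_le hi⟩
    · intro h i
      have := h i (Nat.lt_succ_iff.mp i.isLt)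
      rw [this]
      simp only [extZ, dif_pos i.isLt, Fin.eta]
  rw [hset, hcyl]
  have h0 : extZ m a 0 = a 0 := by
    simp only [extZ, dif_pos (Nat.succ_pos m)]
    congr 1
  rw [h0]
  by_cases hx : a 0 = x
  · rw [if_pos hx, if_pos hx]
    rw [ENNReal.ofReal_prod_of_nonneg (fun i _ => hnn _ _)]
    rw [W, ← Fin.prod_univ_eq_prod_range
      (fun i : ℕ => ENNReal.ofReal (πz (extZ m a i) (extZ m a (i+1) - extZ m a i))) m]
    apply Finset.prod_congr rfl
    intro i _
    have h1 : extZ m a (i : ℕ) = a i.castSucc := by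
      simp only [extZ, dif_pos (Nat.lt_succ_of_lt i.isLt)]
      congr 1
    have h2 : extZ m a ((i : ℕ) + 1) = a i.succ := by
      simp only [extZ, dif_pos (Nat.succ_lt_succ i.isLt)]
      congr 1
    rw [h1, h2, peF]
  · rw [if_neg hx, if_neg hx]


noncomputable def cInd (L x : ℤ) (n : ℕ) (a : Fin (n+1) → ℤ) : ℝ≥0∞ :=
  if a 0 = x ∧ ∀ i, |a i| ≤ L ∧ a i ≠ 0 then 1 else 0

lemma peF_total (πz : ℤ → ℤ → ℝ) (hnn : ∀ z w, 0 ≤ πz z w)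
    (hsum : ∀ z, HasSum (πz z) 1) (z : ℤ) :
    ∑' b : ℤ, peF πz z (b - z) = 1 := by
  have h1 : ∑' b : ℤ, peF πz z (b - z) = ∑' w : ℤ, peF πz z w :=
    (Equiv.subRight z).tsum_eq (fun w => peF πz z w)
  rw [h1]
  unfold peF
  rw [← ENNReal.ofReal_tsum_of_nonneg (hnn z) (hsum z).summable, (hsum z).tsum_eq]
  exact ENNReal.ofReal_one

lemma step_bound (πz : ℤ → ℤ → ℝ) (hnn : ∀ z w, 0 ≤ πz z w)
    (hsum : ∀ z, HasSum (πz z) 1) (L : ℤ) (hL : 0 < L) (δ : ℝ)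
    (z : ℤ) (hδ : δ ≤ πz z (2*L+1 - z)) :
    ∑' b : ℤ, (if |b| ≤ L ∧ b ≠ 0 then (1:ℝ≥0∞) else 0) * peF πz z (b - z)
      ≤ 1 - ENNReal.ofReal δ := by
  have habs : |(2*L+1 : ℤ)| = 2*L+1 := abs_of_pos (by omega)
  have hsplit : (1:ℝ≥0∞) = peF πz z (2*L+1 - z) +
      ∑' b : ℤ, (@ite ℝ≥0∞ (b = 2*L+1) (Classical.propDecidable _) 0 (peF πz z (b - z))) := by
    rw [← peF_total πz hnn hsum z,
      ENNReal.tsum_eq_add_tsum_ite (f := fun b : ℤ => peF πz z (b - z)) (2*L+1)]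
  have hrest : ∑' b : ℤ, (@ite ℝ≥0∞ (b = 2*L+1) (Classical.propDecidable _) 0 (peF πz z (b - z)))
      = 1 - peF πz z (2*L+1 - z) := by
    refine ENNReal.eq_sub_of_add_eq ENNReal.ofReal_ne_top ?_
    rw [add_comm]; exact hsplit.symm
  calc ∑' b : ℤ, (if |b| ≤ L ∧ b ≠ 0 then (1:ℝ≥0∞) else 0) * peF πz z (b - z)
      ≤ ∑' b : ℤ, (@ite ℝ≥0∞ (b = 2*L+1) (Classical.propDecidable _) 0 (peF πz z (b - z))) := by
        refine ENNReal.tsum_le_tsum fun b => ?_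
        by_cases hb : |b| ≤ L ∧ b ≠ 0
        · rw [if_pos hb, one_mul, if_neg (by intro hbe; rw [hbe] at hb; omega)]
        · rw [if_neg hb, zero_mul]; exact zero_le
    _ = 1 - peF πz z (2*L+1 - z) := hrest
    _ ≤ 1 - ENNReal.ofReal δ :=
        tsub_le_tsub_left (ENNReal.ofReal_le_ofReal hδ) 1

lemma W_snoc (πz : ℤ → ℤ → ℝ) (n : ℕ) (a : Fin (n+1) → ℤ) (b : ℤ) :
    W πz (n+1) (Fin.snoc a b) =
      W πz n a * peF πz (a (Fin.last n)) (b - a (Fin.last n)) := by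
  simp [W, Fin.prod_univ_castSucc, Fin.snoc_castSucc, Fin.succ_castSucc,
    Fin.succ_last, Fin.snoc_last, -Fin.castSucc_succ]

lemma cInd_snoc (L x : ℤ) (n : ℕ) (a : Fin (n+1) → ℤ) (b : ℤ) :
    cInd L x (n+1) (Fin.snoc a b) =
      cInd L x n a * (if |b| ≤ L ∧ b ≠ 0 then (1:ℝ≥0∞) else 0) := by
  have h0 : (Fin.snoc a b : Fin (n+2) → ℤ) 0 = a 0 := by
    simpa using Fin.snoc_castSucc (α := fun _ : Fin (n+2) => ℤ) b a 0
  have hall : (∀ i : Fin (n+2), |(Fin.snoc a b : Fin (n+2) → ℤ) i| ≤ L ∧ (Fin.snoc a b : Fin (n+2) → ℤ) i ≠ 0) ↔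
      ((∀ i : Fin (n+1), |a i| ≤ L ∧ a i ≠ 0) ∧ (|b| ≤ L ∧ b ≠ 0)) := by
    constructor
    · intro h
      refine ⟨fun i => ?_, ?_⟩
      · simpa [Fin.snoc_castSucc] using h i.castSucc
      · simpa [Fin.snoc_last] using h (Fin.last (n+1))
    · rintro ⟨h1, h2⟩ i
      refine Fin.lastCases ?_ (fun j => ?_) i
      · simpa [Fin.snoc_last] using h2
      · simpa [Fin.snoc_castSucc] using h1 j
  have key : ((Fin.snoc a b : Fin (n+2) → ℤ) 0 = x ∧
      ∀ i : Fin (n+2), |(Fin.snoc a b : Fin (n+2) → ℤ) i| ≤ L ∧ (Fin.snoc a b : Fin (n+2) → ℤ) i ≠ 0) ↔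
      ((a 0 = x ∧ ∀ i : Fin (n+1), |a i| ≤ L ∧ a i ≠ 0) ∧ (|b| ≤ L ∧ b ≠ 0)) := by
    rw [h0, hall]; tauto
  simp only [cInd, if_congr key rfl rfl]
  by_cases h1 : (a 0 = x ∧ ∀ i : Fin (n+1), |a i| ≤ L ∧ a i ≠ 0) <;>
    by_cases h2 : (|b| ≤ L ∧ b ≠ 0) <;> simp [h1, h2]

lemma Ssum_le (πz : ℤ → ℤ → ℝ) (hnn : ∀ z w, 0 ≤ πz z w)
    (hsum : ∀ z, HasSum (πz z) 1) (L x : ℤ) (hL : 0 < L) (δ : ℝ)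
    (hδ : ∀ z, |z| ≤ L ∧ z ≠ 0 → δ ≤ πz z (2*L+1 - z)) :
    ∀ n, ∑' a : Fin (n+1) → ℤ, cInd L x n a * W πz n a
      ≤ (1 - ENNReal.ofReal δ)^n := by
  intro n
  induction n with
  | zero =>
    rw [pow_zero]
    calc ∑' a : Fin 1 → ℤ, cInd L x 0 a * W πz 0 a
        ≤ ∑' a : Fin 1 → ℤ, (if a = (fun _ => x) then (1:ℝ≥0∞) else 0) := by
          refine ENNReal.tsum_le_tsum fun a => ?_
          by_cases hc : (a 0 = x ∧ ∀ i : Fin 1, |a i| ≤ L ∧ a i ≠ 0)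
          · have ha : a = fun _ => x := funext fun i => by
              rw [Subsingleton.elim i 0]; exact hc.1
            have hW : W πz 0 a = 1 := by simp [W]
            rw [if_pos ha, hW, mul_one]
            unfold cInd
            split_ifs <;> simp
          · rw [show cInd L x 0 a = 0 from if_neg hc, zero_mul]; exact zero_le
      _ = 1 := tsum_ite_eq _ _
  | succ n ih =>
    have he := (Fin.snocEquiv (fun _ : Fin (n+2) => ℤ)).tsum_eq
      (fun a => cInd L x (n+1) a * W πz (n+1) a)
    rw [← he]
    have heval : ∀ p : ℤ × (Fin (n+1) → ℤ),
        cInd L x (n+1) ((Fin.snocEquiv (fun _ : Fin (n+2) => ℤ)) p)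
          * W πz (n+1) ((Fin.snocEquiv (fun _ : Fin (n+2) => ℤ)) p)
        = (cInd L x n p.2 * W πz n p.2) *
            ((if |p.1| ≤ L ∧ p.1 ≠ 0 then (1:ℝ≥0∞) else 0) *
              peF πz (p.2 (Fin.last n)) (p.1 - p.2 (Fin.last n))) := by
      rintro ⟨b, a⟩
      have : (Fin.snocEquiv (fun _ : Fin (n+2) => ℤ)) (b, a) = Fin.snoc a b := rfl
      rw [this, cInd_snoc, W_snoc]
      ring
    calc ∑' p : ℤ × (Fin (n+1) → ℤ),
          cInd L x (n+1) ((Fin.snocEquiv (fun _ : Fin (n+2) => ℤ)) p)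
            * W πz (n+1) ((Fin.snocEquiv (fun _ : Fin (n+2) => ℤ)) p)
        = ∑' p : ℤ × (Fin (n+1) → ℤ), (cInd L x n p.2 * W πz n p.2) *
            ((if |p.1| ≤ L ∧ p.1 ≠ 0 then (1:ℝ≥0∞) else 0) *
              peF πz (p.2 (Fin.last n)) (p.1 - p.2 (Fin.last n))) := by
          exact tsum_congr heval
      _ = ∑' (b : ℤ) (a : Fin (n+1) → ℤ), (cInd L x n a * W πz n a) *
            ((if |b| ≤ L ∧ b ≠ 0 then (1:ℝ≥0∞) else 0) *
              peF πz (a (Fin.last n)) (b - a (Fin.last n))) :=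
          ENNReal.tsum_prod (f := fun (b : ℤ) (a : Fin (n+1) → ℤ) =>
            (cInd L x n a * W πz n a) *
            ((if |b| ≤ L ∧ b ≠ 0 then (1:ℝ≥0∞) else 0) *
              peF πz (a (Fin.last n)) (b - a (Fin.last n))))
      _ = ∑' (a : Fin (n+1) → ℤ) (b : ℤ), (cInd L x n a * W πz n a) *
            ((if |b| ≤ L ∧ b ≠ 0 then (1:ℝ≥0∞) else 0) *
              peF πz (a (Fin.last n)) (b - a (Fin.last n))) := ENNReal.tsum_comm
      _ = ∑' (a : Fin (n+1) → ℤ), (cInd L x n a * W πz n a) *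
            ∑' (b : ℤ), ((if |b| ≤ L ∧ b ≠ 0 then (1:ℝ≥0∞) else 0) *
              peF πz (a (Fin.last n)) (b - a (Fin.last n))) := by
          exact tsum_congr fun a => ENNReal.tsum_mul_left
      _ ≤ ∑' (a : Fin (n+1) → ℤ), (cInd L x n a * W πz n a) *
            (1 - ENNReal.ofReal δ) := by
          refine ENNReal.tsum_le_tsum fun a => ?_
          by_cases hc : (a 0 = x ∧ ∀ i : Fin (n+1), |a i| ≤ L ∧ a i ≠ 0)
          · refine mul_le_mul_right ?_ _
            exact step_bound πz hnn hsum L hL δ (a (Fin.last n))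
              (hδ _ (hc.2 (Fin.last n)))
          · simp [cInd, hc]
      _ = (∑' (a : Fin (n+1) → ℤ), cInd L x n a * W πz n a) *
            (1 - ENNReal.ofReal δ) := ENNReal.tsum_mul_right
      _ ≤ (1 - ENNReal.ofReal δ)^n * (1 - ENNReal.ofReal δ) :=
          mul_le_mul_left ih _
      _ = (1 - ENNReal.ofReal δ)^(n+1) := (pow_succ _ _).symm


noncomputable def cTop (L : ℤ) (m : ℕ) (a : Fin (m+1) → ℤ) : ℝ≥0∞ :=
  if (∀ i : Fin (m+1), (i:ℕ) < m → (|a i| ≤ L ∧ a i ≠ 0)) ∧ L < |a (Fin.last m)|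
  then ENNReal.ofReal |((a (Fin.last m) : ℤ) : ℝ)| else 0

lemma gfun_eq (L : ℤ) (m : ℕ) (ω : ℕ → ℤ) :
    gfun L m ω = cTop L m (fun i : Fin (m+1) => ω i) := by
  unfold gfun cTop
  refine if_congr ?_ rfl rfl
  constructor
  · rintro ⟨h1, h2⟩
    exact ⟨fun i hi => h1 i.1 hi, h2⟩
  · rintro ⟨h1, h2⟩
    exact ⟨fun i hi => h1 ⟨i, Nat.lt_succ_of_lt hi⟩ hi, h2⟩

lemma gfun_meas (L : ℤ) (m : ℕ) : Measurable (gfun L m) := by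
  have hrepr : gfun L m = Set.indicator
      ((⋂ (i : ℕ) (_ : i < m), (fun ω : ℕ → ℤ => ω i) ⁻¹' {z | |z| ≤ L ∧ z ≠ 0}) ∩
        ((fun ω : ℕ → ℤ => ω m) ⁻¹' {z | L < |z|}))
      (fun ω => ENNReal.ofReal |((ω m : ℤ) : ℝ)|) := by
    ext ω
    by_cases h : (∀ i < m, |ω i| ≤ L ∧ ω i ≠ 0) ∧ L < |ω m|
    · rw [gfun, if_pos h, Set.indicator_of_mem (by simpa using h)]
    · rw [gfun, if_neg h, Set.indicator_of_notMem (by simpa using h)]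
  rw [hrepr]
  refine Measurable.indicator ?_ ?_
  · exact Measurable.comp (g := fun z : ℤ => ENNReal.ofReal |((z : ℤ) : ℝ)|)
      measurable_from_top (measurable_pi_apply m)
  · exact MeasurableSet.inter
      (MeasurableSet.iInter fun i => MeasurableSet.iInter fun _ =>
        (measurable_pi_apply i) trivial)
      ((measurable_pi_apply m) trivial)

lemma Ksummable (f F : ℝ) (hf : 0 < f) (c : ℝ) :
    Summable (fun w : ℤ => (|(w:ℝ)| + c) * (F * Real.exp (-f * |(w:ℝ)|))) := by
  have hr : Real.exp (-f) < 1 := Real.exp_lt_one_iff.mpr (by linarith)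
  have hr0 : 0 ≤ Real.exp (-f) := (Real.exp_pos _).le
  have hnat : Summable (fun n : ℕ => ((n:ℝ) + c) * (F * Real.exp (-f * (n:ℝ)))) := by
    have h1 : Summable (fun n : ℕ => (n:ℝ) * Real.exp (-f) ^ n) := by
      simpa using summable_pow_mul_geometric_of_norm_lt_one 1
        (r := Real.exp (-f)) (by rwa [Real.norm_eq_abs, abs_of_nonneg hr0])
    have h2 : Summable (fun n : ℕ => c * Real.exp (-f) ^ n) :=
      (summable_geometric_of_lt_one hr0 hr).mul_left c
    have h3 := (h1.add h2).mul_left F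
    refine h3.congr fun n => ?_
    have hx : Real.exp (-f * (n:ℝ)) = Real.exp (-f) ^ n := by
      rw [← Real.exp_nat_mul]; ring_nf
    rw [hx]; ring
  refine Summable.of_nat_of_neg (hnat.congr fun n => ?_) (hnat.congr fun n => ?_)
  · norm_num
  · push_cast
    rw [abs_neg, abs_of_nonneg (Nat.cast_nonneg n)]

lemma cTop_snoc (L : ℤ) (n : ℕ) (a : Fin (n+1) → ℤ) (b : ℤ) :
    cTop L (n+1) (Fin.snoc a b) =
      (if ∀ i : Fin (n+1), |a i| ≤ L ∧ a i ≠ 0 then (1:ℝ≥0∞) else 0) *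
      (if L < |b| then ENNReal.ofReal |((b : ℤ) : ℝ)| else 0) := by
  have hlast : (Fin.snoc a b : Fin (n+2) → ℤ) (Fin.last (n+1)) = b := Fin.snoc_last _ _
  have hcond : (∀ i : Fin (n+2), (i:ℕ) < n+1 →
      (|(Fin.snoc a b : Fin (n+2) → ℤ) i| ≤ L ∧ (Fin.snoc a b : Fin (n+2) → ℤ) i ≠ 0)) ↔
      (∀ j : Fin (n+1), |a j| ≤ L ∧ a j ≠ 0) := by
    constructor
    · intro h j
      have := h j.castSucc (by simpa using j.isLt)
      simpa [Fin.snoc_castSucc] using this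
    · intro h i hi
      have hieq : i = (⟨i.1, hi⟩ : Fin (n+1)).castSucc := Fin.ext rfl
      rw [hieq, Fin.snoc_castSucc]
      exact h _
  unfold cTop
  rw [hlast, if_congr (and_congr_left fun _ => hcond) rfl rfl]
  by_cases h1 : ∀ j : Fin (n+1), |a j| ≤ L ∧ a j ≠ 0 <;>
    by_cases h2 : L < |b| <;> simp [h1, h2]


lemma K_bound (πz : ℤ → ℤ → ℝ) (hnn : ∀ z w, 0 ≤ πz z w) (f F : ℝ)
    (htail : ∀ z w, πz z w ≤ F * Real.exp (-f * |(w:ℝ)|)) (L : ℤ) (hL : 0 ≤ L)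
    (z : ℤ) (hz : |z| ≤ L) :
    ∑' b : ℤ, (if L < |b| then ENNReal.ofReal |((b : ℤ) : ℝ)| else 0) * peF πz z (b - z)
      ≤ ∑' w : ℤ, ENNReal.ofReal ((|(w:ℝ)| + (L:ℝ)) * (F * Real.exp (-f * |(w:ℝ)|))) := by
  rw [← (Equiv.addRight z).tsum_eq (fun b : ℤ =>
    (if L < |b| then ENNReal.ofReal |((b : ℤ) : ℝ)| else 0) * peF πz z (b - z))]
  refine ENNReal.tsum_le_tsum fun w => ?_
  have he : (Equiv.addRight z) w = w + z := rfl
  rw [he]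
  unfold peF
  simp only [add_sub_cancel_right]
  by_cases hb : L < |w + z|
  · rw [if_pos hb]
    rw [← ENNReal.ofReal_mul (abs_nonneg _)]
    apply ENNReal.ofReal_le_ofReal
    apply mul_le_mul
    · have h1 : |((w + z : ℤ) : ℝ)| ≤ |(w:ℝ)| + |(z:ℝ)| := by
        push_cast; exact abs_add_le _ _
      have hzr : |(z:ℝ)| ≤ (L:ℝ) := by
        rw [← Int.cast_abs]; exact_mod_cast hz
      calc |((w + z : ℤ) : ℝ)| ≤ |(w:ℝ)| + |(z:ℝ)| := h1
        _ ≤ |(w:ℝ)| + (L:ℝ) := by linarith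
    · exact htail z w
    · exact hnn z w
    · exact add_nonneg (abs_nonneg _) (by exact_mod_cast hL)
  · rw [if_neg hb, zero_mul]
    exact zero_le

lemma Tsum_le (πz : ℤ → ℤ → ℝ) (hnn : ∀ z w, 0 ≤ πz z w)
    (f F : ℝ) (htail : ∀ z w, πz z w ≤ F * Real.exp (-f * |(w:ℝ)|))
    (L x : ℤ) (hL : 0 ≤ L) (n : ℕ) :
    ∑' a : Fin (n+2) → ℤ, cTop L (n+1) a * (if a 0 = x then W πz (n+1) a else 0)
      ≤ (∑' a : Fin (n+1) → ℤ, cInd L x n a * W πz n a) *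
        ∑' w : ℤ, ENNReal.ofReal ((|(w:ℝ)| + (L:ℝ)) * (F * Real.exp (-f * |(w:ℝ)|))) := by
  rw [← (Fin.snocEquiv (fun _ : Fin (n+2) => ℤ)).tsum_eq
    (fun a => cTop L (n+1) a * (if a 0 = x then W πz (n+1) a else 0))]
  have heval : ∀ p : ℤ × (Fin (n+1) → ℤ),
      cTop L (n+1) ((Fin.snocEquiv (fun _ : Fin (n+2) => ℤ)) p)
        * (if ((Fin.snocEquiv (fun _ : Fin (n+2) => ℤ)) p) 0 = x
            then W πz (n+1) ((Fin.snocEquiv (fun _ : Fin (n+2) => ℤ)) p) else 0)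
      = (cInd L x n p.2 * W πz n p.2) *
          ((if L < |p.1| then ENNReal.ofReal |((p.1 : ℤ) : ℝ)| else 0) *
            peF πz (p.2 (Fin.last n)) (p.1 - p.2 (Fin.last n))) := by
    rintro ⟨b, a⟩
    have hE : (Fin.snocEquiv (fun _ : Fin (n+2) => ℤ)) (b, a) = Fin.snoc a b := rfl
    have h0 : (Fin.snoc a b : Fin (n+2) → ℤ) 0 = a 0 := by
      simpa using Fin.snoc_castSucc (α := fun _ : Fin (n+2) => ℤ) b a 0
    rw [hE, cTop_snoc, h0, W_snoc]
    by_cases hx : a 0 = x <;>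
      by_cases hall : ∀ j : Fin (n+1), |a j| ≤ L ∧ a j ≠ 0 <;>
        simp [cInd, hx, hall] <;> ring
  calc ∑' p : ℤ × (Fin (n+1) → ℤ),
        cTop L (n+1) ((Fin.snocEquiv (fun _ : Fin (n+2) => ℤ)) p)
          * (if ((Fin.snocEquiv (fun _ : Fin (n+2) => ℤ)) p) 0 = x
              then W πz (n+1) ((Fin.snocEquiv (fun _ : Fin (n+2) => ℤ)) p) else 0)
      = ∑' p : ℤ × (Fin (n+1) → ℤ), (cInd L x n p.2 * W πz n p.2) *
          ((if L < |p.1| then ENNReal.ofReal |((p.1 : ℤ) : ℝ)| else 0) *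
            peF πz (p.2 (Fin.last n)) (p.1 - p.2 (Fin.last n))) := tsum_congr heval
    _ = ∑' (b : ℤ) (a : Fin (n+1) → ℤ), (cInd L x n a * W πz n a) *
          ((if L < |b| then ENNReal.ofReal |((b : ℤ) : ℝ)| else 0) *
            peF πz (a (Fin.last n)) (b - a (Fin.last n))) :=
        ENNReal.tsum_prod (f := fun (b : ℤ) (a : Fin (n+1) → ℤ) =>
          (cInd L x n a * W πz n a) *
          ((if L < |b| then ENNReal.ofReal |((b : ℤ) : ℝ)| else 0) *
            peF πz (a (Fin.last n)) (b - a (Fin.last n))))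
    _ = ∑' (a : Fin (n+1) → ℤ) (b : ℤ), (cInd L x n a * W πz n a) *
          ((if L < |b| then ENNReal.ofReal |((b : ℤ) : ℝ)| else 0) *
            peF πz (a (Fin.last n)) (b - a (Fin.last n))) := ENNReal.tsum_comm
    _ = ∑' (a : Fin (n+1) → ℤ), (cInd L x n a * W πz n a) *
          ∑' (b : ℤ), ((if L < |b| then ENNReal.ofReal |((b : ℤ) : ℝ)| else 0) *
            peF πz (a (Fin.last n)) (b - a (Fin.last n))) :=
        tsum_congr fun a => ENNReal.tsum_mul_left
    _ ≤ ∑' (a : Fin (n+1) → ℤ), (cInd L x n a * W πz n a) *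
          ∑' w : ℤ, ENNReal.ofReal ((|(w:ℝ)| + (L:ℝ)) * (F * Real.exp (-f * |(w:ℝ)|))) := by
        refine ENNReal.tsum_le_tsum fun a => ?_
        by_cases hc : (a 0 = x ∧ ∀ i : Fin (n+1), |a i| ≤ L ∧ a i ≠ 0)
        · exact mul_le_mul_right
            (K_bound πz hnn f F htail L hL (a (Fin.last n)) (hc.2 (Fin.last n)).1) _
        · simp [cInd, hc]
    _ = (∑' a : Fin (n+1) → ℤ, cInd L x n a * W πz n a) *
          ∑' w : ℤ, ENNReal.ofReal ((|(w:ℝ)| + (L:ℝ)) * (F * Real.exp (-f * |(w:ℝ)|))) :=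
        ENNReal.tsum_mul_right

/-- The quantity `sup_{x ∈ I} 𝔼_x(|X_{λ_1}| · 1{λ_1 < ∞})` is finite, where
`λ_1 = T' ∧ H_0` for the Markov chain on `ℤ` with transitions
`P(z, w) = π_z(w − z)`. -/
theorem stmt13
    (π : ℤ → ℝ) (πz : ℤ → ℤ → ℝ)
    (hπ : IsPMF π) (hπz : ∀ z, IsPMF (πz z))
    (hsymm : ∀ x, π (-x) = π x)
    (hsupp : (∀ x, 0 < π x) ∧ ∀ z, z ≠ 0 → ∀ x, 0 < πz z x)
    (htail : ∃ f F : ℝ, 0 < f ∧ 0 < F ∧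
      (∀ x, π x ≤ F * Real.exp (-f * |(x : ℝ)|)) ∧
      (∀ z x, πz z x ≤ F * Real.exp (-f * |(x : ℝ)|)))
    (htv : ∃ g G : ℝ, 0 < g ∧ 0 < G ∧
      ∀ z, (1 / 2) * ∑' x, |πz z x - π x| ≤ G * Real.exp (-g * |(z : ℝ)|))
    (L : ℤ) (hL : 0 < L)
    (P : ℤ → Measure (ℕ → ℤ))
    (hP : ∀ x, IsProbabilityMeasure (P x))
    (hcyl : ∀ (x : ℤ) (n : ℕ) (a : ℕ → ℤ),
      P x {ω | ∀ i ≤ n, ω i = a i} =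
        if a 0 = x then
          ENNReal.ofReal (∏ i ∈ Finset.range n, πz (a i) (a (i + 1) - a i))
        else 0) :
    ∃ C : ℝ, ∀ x : ℤ, |x| ≤ L →
      ∫⁻ ω, (if lam1 L ω ≠ ⊤ then
          ENNReal.ofReal |((ω (lam1 L ω).toNat : ℤ) : ℝ)|
        else 0) ∂(P x) ≤ ENNReal.ofReal C := by
  classical
  have hnn : ∀ z w, 0 ≤ πz z w := fun z w => (hπz z).1 w
  have hsum : ∀ z, HasSum (πz z) 1 := fun z => (hπz z).2
  obtain ⟨f, F, hf, hF, -, htail2⟩ := htail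
  set J' : Finset ℤ := (Finset.Icc (-L) L).erase 0 with hJ'
  have hJne : J'.Nonempty := ⟨1, by
    rw [hJ', Finset.mem_erase, Finset.mem_Icc]
    refine ⟨one_ne_zero, by omega, by omega⟩⟩
  set δ : ℝ := J'.inf' hJne (fun z => πz z (2*L+1 - z)) with hδdef
  have hδpos : 0 < δ := by
    rw [hδdef, Finset.lt_inf'_iff]
    intro z hz
    exact hsupp.2 z (Finset.ne_of_mem_erase hz) _
  have hδle : ∀ z, |z| ≤ L ∧ z ≠ 0 → δ ≤ πz z (2*L+1 - z) := by
    intro z hz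
    refine Finset.inf'_le _ ?_
    rw [hJ', Finset.mem_erase, Finset.mem_Icc]
    have := abs_le.mp hz.1
    exact ⟨hz.2, this.1, this.2⟩
  set ρ : ℝ≥0∞ := 1 - ENNReal.ofReal δ with hρdef
  have hρlt : ρ < 1 := ENNReal.sub_lt_self ENNReal.one_ne_top one_ne_zero
    (ENNReal.ofReal_pos.mpr hδpos).ne'
  set K : ℝ≥0∞ :=
    ∑' w : ℤ, ENNReal.ofReal ((|(w:ℝ)| + (L:ℝ)) * (F * Real.exp (-f * |(w:ℝ)|))) with hKdef
  have hLr : (0:ℝ) ≤ (L:ℝ) := by exact_mod_cast hL.le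
  have hKne : K ≠ ⊤ := by
    rw [hKdef, ← ENNReal.ofReal_tsum_of_nonneg
      (fun w => mul_nonneg (add_nonneg (abs_nonneg _) hLr)
        (mul_nonneg hF.le (Real.exp_pos _).le))
      (Ksummable f F hf (L:ℝ))]
    exact ENNReal.ofReal_ne_top
  set B : ℝ≥0∞ := ENNReal.ofReal (L:ℝ) + (1 - ρ)⁻¹ * K with hBdef
  have hBne : B ≠ ⊤ := by
    rw [hBdef]
    exact ENNReal.add_ne_top.mpr ⟨ENNReal.ofReal_ne_top,
      ENNReal.mul_ne_top (ENNReal.inv_ne_top.mpr (tsub_pos_of_lt hρlt).ne') hKne⟩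
  refine ⟨B.toReal, fun x hx => ?_⟩
  rw [ENNReal.ofReal_toReal hBne]
  haveI := hP x
  calc ∫⁻ ω, (if lam1 L ω ≠ ⊤ then
          ENNReal.ofReal |((ω (lam1 L ω).toNat : ℤ) : ℝ)| else 0) ∂(P x)
      ≤ ∫⁻ ω, (ENNReal.ofReal (L:ℝ) + ∑' n : ℕ, gfun L (n + 1) ω) ∂(P x) :=
        lintegral_mono (pointwise_bound L hL)
    _ = ENNReal.ofReal (L:ℝ) + ∑' n : ℕ, ∫⁻ ω, gfun L (n+1) ω ∂(P x) := by
        rw [lintegral_add_left measurable_const, lintegral_const, measure_univ, mul_one,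
          lintegral_tsum (fun n => (gfun_meas L (n+1)).aemeasurable)]
    _ ≤ ENNReal.ofReal (L:ℝ) + ∑' n : ℕ, ρ^n * K := by
        refine add_le_add_right (ENNReal.tsum_le_tsum fun n => ?_) _
        calc ∫⁻ ω, gfun L (n+1) ω ∂(P x)
            = ∫⁻ ω, cTop L (n+1) (fun i : Fin (n+2) => ω i) ∂(P x) :=
              lintegral_congr (fun ω => gfun_eq L (n+1) ω)
          _ = ∑' a : Fin (n+2) → ℤ, cTop L (n+1) a * (P x) (cylSet (n+1) a) :=
              lint_cyl (n+1) (cTop L (n+1)) (P x)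
          _ = ∑' a : Fin (n+2) → ℤ,
                cTop L (n+1) a * (if a 0 = x then W πz (n+1) a else 0) :=
              tsum_congr fun a => by rw [P_cyl πz hnn P hcyl x (n+1) a]
          _ ≤ (∑' a : Fin (n+1) → ℤ, cInd L x n a * W πz n a) * K :=
              Tsum_le πz hnn f F htail2 L x hL.le n
          _ ≤ ρ^n * K := mul_le_mul_left (Ssum_le πz hnn hsum L x hL δ hδle n) _
    _ = ENNReal.ofReal (L:ℝ) + (1-ρ)⁻¹ * K := by
        rw [ENNReal.tsum_mul_right, ENNReal.tsum_geometric]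
    _ = B := hBdef.symm
end
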